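/- If π(i,m) and π(i,n) are plays on the basic tile τ(λx̄1,…,λx̄k) with i < m < n, and π(i,m) = π(i1,j1),…,π(in',jn') where u1, λȳ1, …, un', λȳn' is the path of labels of nodes from the root of τ to its atomic leaf λx̄j = λȳn' ∈ π(m) and each π(il,jl) is a play on the simple tile ul(…λȳl…) with λȳl ∈ π(jl), then there is a position m' with m < m' < n such that π(m') is a child of π(jl') for some l'. -/

import Mathlib

set_option autoImplicit false

/-! ## Simple types over a single base type -/

inductive Ty : Type
  | base : Ty
  | arr : Ty → Ty → Ty
  deriving DecidableEq

/-- The order of a simple type. -/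
def Ty.order : Ty → ℕ
  | .base => 1
  | .arr A B => max (A.order + 1) B.order

/-- The number of top-level arguments (the width) of a type. -/
def Ty.arity : Ty → ℕ
  | .base => 0
  | .arr _ B => B.arity + 1

/-- The argument types `A₁,…,Aₙ` of `(A₁,…,Aₙ,0)`. -/
def Ty.args : Ty → List Ty
  | .base => []
  | .arr A B => A :: B.args

/-- The largest width of any subtype of a type. -/
def Ty.subWidth : Ty → ℕ
  | .base => 0
  | .arr A B => max (Ty.arity (.arr A B)) (max A.subWidth B.subWidth)

/-! ## Simply typed λ-terms with named, typed variables and constants -/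

inductive Tm : Type
  | var : ℕ → Ty → Tm
  | const : ℕ → Ty → Tm
  | lam : ℕ → Ty → Tm → Tm
  | app : Tm → Tm → Tm
  deriving DecidableEq

namespace Tm

/-- The type of a term (if well-typed). -/
def ty? : Tm → Option Ty
  | .var _ A => some A
  | .const _ A => some A
  | .lam _ A t => (ty? t).map (Ty.arr A)
  | .app s t =>
      match ty? s with
      | some (Ty.arr A B) => if ty? t = some A then some B else none
      | _ => none

/-- The free variables (name/type pairs). -/
def free : Tm → Set (ℕ × Ty)
  | .var x A => {(x, A)}
  | .const _ _ => ∅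
  | .lam x A t => free t \ {(x, A)}
  | .app s t => free s ∪ free t

def Closed (t : Tm) : Prop := t.free = ∅

/-- `z` occurs free in `t`. -/
def freeName (t : Tm) (z : ℕ) : Prop := ∃ B, (z, B) ∈ t.free

/-- A binder `λz` occurs in `t`. -/
def bindsVar : Tm → ℕ → Prop
  | .var _ _, _ => False
  | .const _ _, _ => False
  | .lam x _ t, z => x = z ∨ bindsVar t z
  | .app s t, z => bindsVar s z ∨ bindsVar t z

/-- The constants occurring in a term. -/
def consts : Tm → Set ℕ
  | .var _ _ => ∅
  | .const c _ => {c}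
  | .lam _ _ t => consts t
  | .app s t => consts s ∪ consts t

/-- The list of bound-variable names. -/
def binders : Tm → List ℕ
  | .var _ _ => []
  | .const _ _ => []
  | .lam x _ t => x :: binders t
  | .app s t => binders s ++ binders t

/-- A term is well-named if all its binders are pairwise distinct. -/
def WellNamed (t : Tm) : Prop := t.binders.Nodup

/-- Substitution of `u` for the free variable `x : A` (capture-permitting; it is
only applied to well-named terms with disjoint bound variables). -/
def subst (x : ℕ) (A : Ty) (u : Tm) : Tm → Tm
  | .var y B => if y = x ∧ B = A then u else .var y B
  | .const c B => .const c B
  | .lam y B t => if y = x ∧ B = A then .lam y B t else .lam y B (subst x A u t)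
  | .app s t => .app (subst x A u s) (subst x A u t)

/-- One-step β-reduction, closed under congruence. -/
inductive Beta : Tm → Tm → Prop
  | beta (x : ℕ) (A : Ty) (t u : Tm) : Beta (.app (.lam x A t) u) (subst x A u t)
  | appL {s s' : Tm} (t : Tm) : Beta s s' → Beta (.app s t) (.app s' t)
  | appR (s : Tm) {t t' : Tm} : Beta t t' → Beta (.app s t) (.app s t')
  | lam (x : ℕ) (A : Ty) {t t' : Tm} : Beta t t' → Beta (Tm.lam x A t) (Tm.lam x A t')

/-- β-equality. -/
def BetaEq : Tm → Tm → Prop := Relation.EqvGen Beta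

/-- Application of a head to a list of arguments. -/
def appArgs (t : Tm) (args : List Tm) : Tm := args.foldl .app t

inductive IsHead : Tm → Prop
  | var (x : ℕ) (A : Ty) : IsHead (.var x A)
  | const (c : ℕ) (A : Ty) : IsHead (.const c A)

/-- η-long normal forms. -/
inductive ELNF : Tm → Prop
  | head (u : Tm) (args : List Tm) :
      IsHead u → (appArgs u args).ty? = some Ty.base →
      (∀ i : Fin args.length, ELNF args[i]) → ELNF (appArgs u args)
  | lam (x : ℕ) (A : Ty) {t : Tm} : ELNF t → ELNF (Tm.lam x A t)

/-- Strip the leading λ-abstractions. -/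
def stripLams : Tm → List (ℕ × Ty) × Tm
  | .lam x A t => ((x, A) :: (stripLams t).1, (stripLams t).2)
  | t => ([], t)

/-- Decompose a term into its head and arguments. -/
def headArgs : Tm → Tm × List Tm
  | .app s u => ((headArgs s).1, (headArgs s).2 ++ [u])
  | t => (t, [])

/-- `λx₁…xₙ. b` for a list of binders. -/
def lams (xs : List (ℕ × Ty)) (b : Tm) : Tm := xs.foldr (fun p s => Tm.lam p.1 p.2 s) b

/-- Replace the free variables `xs` by their forbidden constants (via `fc`). -/
def fsubst (fc : ℕ → ℕ) (xs : List (ℕ × Ty)) (t : Tm) : Tm :=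
  xs.foldl (fun s p => subst p.1 p.2 (Tm.const (fc p.1) p.2) s) t

/-- Replace each `yⱼ ∈ ys` by the forbidden constant of the corresponding
`xⱼ ∈ xs`. -/
def fsubstPaired (fc : ℕ → ℕ) (ys xs : List (ℕ × Ty)) (t : Tm) : Tm :=
  (ys.zip xs).foldl (fun s p => subst p.1.1 p.1.2 (Tm.const (fc p.2.1) p.2.2) s) t

def isApp : Tm → Bool
  | .app _ _ => true
  | _ => false

/-- The right size `δ(u)` of a right term. -/
def rsize : Tm → ℕ
  | .var _ _ => 0
  | .const _ _ => 0
  | .lam _ _ t => rsize t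
  | .app s t => rsize s + rsize t + (if s.isApp then 0 else 1)

/-- Largest width of any type occurring in the term. -/
def maxWidth : Tm → ℕ
  | .var _ A => A.subWidth
  | .const _ A => A.subWidth
  | .lam _ A t => max A.subWidth (maxWidth t)
  | .app s t => max (maxWidth s) (maxWidth t)

end Tm

/-! ## Dual interpolation problems -/

/-- An interpolation (dis)equation `x v₁ … vₙ ≈ u`. -/
structure DIEqn : Type where
  args : List Tm
  rhs : Tm
  pos : Bool

/-- A dual interpolation problem: a finite nonempty family of interpolation
equations and disequations with the same free variable `x : xty`, together with
the fresh forbidden constants: `fc` assigns to each bound variable of a right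
term its forbidden constant. -/
structure DIProblem : Type where
  xty : Ty
  eqns : List DIEqn
  eqns_ne : eqns ≠ []
  forb : Set ℕ
  fc : ℕ → ℕ
  fc_mem : ∀ x, fc x ∈ forb
  fc_inj : Function.Injective fc
  wf : ∀ e ∈ eqns,
    e.args.length = xty.args.length ∧
    (∀ p ∈ e.args.zip xty.args, p.1.ty? = some p.2 ∧ p.1.Closed ∧ p.1.ELNF) ∧
    e.rhs.ty? = some Ty.base ∧ e.rhs.Closed ∧
    (∀ c ∈ e.rhs.consts, c ∉ forb) ∧ (∀ v ∈ e.args, ∀ c ∈ v.consts, c ∉ forb)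

/-- The order of a problem is the order of its free variable. -/
def DIProblem.order (P : DIProblem) : ℕ := P.xty.order

/-- The right size `δ` of a problem. -/
def DIProblem.delta (P : DIProblem) : ℕ := (P.eqns.map fun e => e.rhs.rsize).sum

/-- The arity `α` of a problem: the largest width of a type among the subtypes
associated with `P`. -/
def DIProblem.arity (P : DIProblem) : ℕ :=
  max P.xty.subWidth ((P.eqns.map fun e => e.rhs.maxWidth).foldr max 0)

/-- A potential solution term for `P`: closed, in η-long normal form, of the
right type, well-named and without forbidden constants. -/
def Candidate (P : DIProblem) (t : Tm) : Prop :=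
  t.Closed ∧ t.ELNF ∧ t.ty? = some P.xty ∧ t.WellNamed ∧ ∀ c ∈ t.consts, c ∉ P.forb

/-- `t ⊨ P`. -/
def Solves (P : DIProblem) (t : Tm) : Prop :=
  Candidate P t ∧ ∀ e ∈ P.eqns,
    (e.pos = true → Tm.BetaEq (Tm.appArgs t e.args) e.rhs) ∧
    (e.pos = false → ¬ Tm.BetaEq (Tm.appArgs t e.args) e.rhs)

/-! ## Term trees (η-long normal forms with dummy lambdas) -/

/-- Labels of term-tree nodes. -/
inductive TLabel : Type
  | lam : List (ℕ × Ty) → TLabel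
  | var : ℕ → Ty → TLabel
  | const : ℕ → Ty → TLabel
  deriving DecidableEq

/-- Term trees. -/
inductive TTree : Type
  | node : TLabel → List TTree → TTree

def TTree.label : TTree → TLabel
  | .node l _ => l

def TTree.children : TTree → List TTree
  | .node _ cs => cs

/-- The subtree at a path (nodes are identified with paths from the root). -/
def TTree.at? : TTree → List ℕ → Option TTree
  | t, [] => some t
  | t, i :: p =>
      match t.children[i]? with
      | some c => TTree.at? c p
      | none => none

/-- The label at a path. -/
def TTree.labelAt? (T : TTree) (p : List ℕ) : Option TLabel := (T.at? p).map TTree.label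

/-- The variables bound by λ-labels along a path. -/
def TTree.bindersAlong : TTree → List ℕ → List ℕ
  | _, [] => []
  | t, i :: p =>
      (match t.label with
       | .lam xs => xs.map Prod.fst
       | _ => []) ++
      (match t.children[i]? with
       | some c => TTree.bindersAlong c p
       | none => [])

/-- `λ…y…` labels some node of the tree. -/
def TTree.BindsVar (t : TTree) (y : ℕ) : Prop :=
  ∃ p xs, t.labelAt? p = some (.lam xs) ∧ y ∈ xs.map Prod.fst

/-- `y` occurs free in the tree. -/
def TTree.FreeVarOcc (t : TTree) (y : ℕ) : Prop :=
  ∃ p A, t.labelAt? p = some (.var y A) ∧ y ∉ t.bindersAlong p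

def TLabel.isHeadLabel : TLabel → Prop
  | .lam _ => False
  | _ => True

/-! ## Tree representation of a term -/

mutual
  /-- `RepLam T t`: the λ-rooted tree `T` represents the term `t`. -/
  inductive RepLam : TTree → Tm → Prop
    | mk (xs : List (ℕ × Ty)) (h : TTree) (b : Tm) :
        RepHead h b → RepLam (TTree.node (.lam xs) [h]) (Tm.lams xs b)
  /-- `RepHead T t`: the head-rooted tree `T` represents the base-type term `t`. -/
  inductive RepHead : TTree → Tm → Prop
    | var (x : ℕ) (A : Ty) (cs : List TTree) (args : List Tm) :
        cs.length = args.length → (∀ p ∈ cs.zip args, RepLam p.1 p.2) →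
        RepHead (TTree.node (.var x A) cs) (Tm.appArgs (Tm.var x A) args)
    | const (c : ℕ) (A : Ty) (cs : List TTree) (args : List Tm) :
        cs.length = args.length → (∀ p ∈ cs.zip args, RepLam p.1 p.2) →
        RepHead (TTree.node (.const c A) cs) (Tm.appArgs (Tm.const c A) args)
end

/-- The tree `T` is the tree representation (with dummy lambdas) of `t`. -/
def Represents (T : TTree) (t : Tm) : Prop := RepLam T t

/-! ## Look-up tables -/

mutual
  /-- A `θ` look-up table: a partial map from variables of the term tree to
  triples `l ξ j`. -/
  inductive Theta : Type
    | mk : (ℕ → ThetaEntry) → Theta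
  inductive ThetaEntry : Type
    | none : ThetaEntry
    | some : Tm → Xi → ℕ → ThetaEntry
  /-- A `ξ` look-up table: a partial map from variables of left terms to
  triples `t' θ j` (with `t'` a node of the term tree). -/
  inductive Xi : Type
    | mk : (ℕ → XiEntry) → Xi
  inductive XiEntry : Type
    | none : XiEntry
    | some : List ℕ → Theta → ℕ → XiEntry
end

def Theta.fn : Theta → ℕ → ThetaEntry
  | .mk f => f

def Xi.fn : Xi → ℕ → XiEntry
  | .mk f => f

def Theta.look (θ : Theta) (y : ℕ) : Option (Tm × Xi × ℕ) :=
  match θ.fn y with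
  | .none => none
  | .some l ξ j => some (l, ξ, j)

def Xi.look (ξ : Xi) (z : ℕ) : Option (List ℕ × Theta × ℕ) :=
  match ξ.fn z with
  | .none => none
  | .some t θ j => some (t, θ, j)

def Theta.empty : Theta := .mk fun _ => .none

def Xi.empty : Xi := .mk fun _ => .none

/-- Update a `θ` table with a list of new entries. -/
def Theta.updates (θ : Theta) (l : List (ℕ × (Tm × Xi × ℕ))) : Theta :=
  .mk fun y =>
    match l.lookup y with
    | some v => .some v.1 v.2.1 v.2.2
    | none => θ.fn y

/-- Update a `ξ` table with a list of new entries. -/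
def Xi.updates (ξ : Xi) (l : List (ℕ × (List ℕ × Theta × ℕ))) : Xi :=
  .mk fun z =>
    match l.lookup z with
    | some v => .some v.1 v.2.1 v.2.2
    | none => ξ.fn z

/-- `μ` extends `μ'`. -/
def Theta.Extends (θ θ' : Theta) : Prop := ∀ y v, θ'.look y = some v → θ.look y = some v

def Xi.Extends (ξ ξ' : Xi) : Prop := ∀ z v, ξ'.look z = some v → ξ.look z = some v

/-! ## States and positions -/

inductive GState : Type
  | arg : List Tm → Tm → GState     -- argument state q[(l₁,…,lₖ), r]
  | val : Tm → Tm → GState          -- value state q[l, r]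
  | emp : Tm → GState               -- empty state q[−, r]
  | finA : GState                   -- final state q[∀]
  | finE : GState                   -- final state q[∃]
  deriving DecidableEq

def GState.IsFinal : GState → Prop
  | .finA => True
  | .finE => True
  | _ => False

/-- The right term of a state. -/
def GState.rhs? : GState → Option Tm
  | .arg _ r => some r
  | .val _ r => some r
  | .emp r => some r
  | _ => none

/-- `λ…z…` occurs in a left term of the state. -/
def GState.BindsVar : GState → ℕ → Prop
  | .val l _, z => l.bindsVar z
  | .arg ls _, z => ∃ l ∈ ls, l.bindsVar z
  | _, _ => False

/-- `z` occurs free in a left term of the state. -/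
def GState.FreeVar : GState → ℕ → Prop
  | .val l _, z => l.freeName z
  | .arg ls _, z => ∃ l ∈ ls, l.freeName z
  | _, _ => False

/-- A position of the tree-checking game: a node of the term tree, a state and
the two look-up tables. -/
structure GPos : Type where
  node : List ℕ
  st : GState
  th : Theta
  xi : Xi

inductive MoveKind : Type
  | A1 | A2 | A3 | B1 | C1 | C2 | C3 | C4
  deriving DecidableEq

/-! ## The game moves (Figure 2) -/

/-- Updates of `θ` at an A-move: the binders `xs` get the left terms `ls`
paired with `ξ` and the current position index `m`. -/
def aUpd (xs : List (ℕ × Ty)) (ls : List Tm) (ξ : Xi) (m : ℕ) :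
    List (ℕ × (Tm × Xi × ℕ)) :=
  (xs.zip ls).map fun p => (p.1.1, (p.2, ξ, m))

/-- Updates of `ξ` at a C-move: the binders `zs` of the left term get the
successor nodes of `n` paired with `θ` and the current position index `m`. -/
def cUpd (n : List ℕ) (zs : List (ℕ × Ty)) (θ : Theta) (m : ℕ) :
    List (ℕ × (List ℕ × Theta × ℕ)) :=
  zs.zipIdx.map fun p => (p.1.1, (n ++ [p.2], θ, m))

/-- The argument state produced when `∀` chooses the right subterm `s`
(moves B1 and C2): `q[(c_{i₁},…,c_{iₙ}), s{c̄/x̄}]`. -/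
def argStateOf (fc : ℕ → ℕ) (s : Tm) : GState :=
  GState.arg ((s.stripLams.1).map fun p => Tm.const (fc p.1) p.2)
    (Tm.fsubst fc s.stripLams.1 s.stripLams.2)

/-- The value state produced at move C3 for the chosen `w` and `s`:
`q[w'{c̄/ȳ}, s{c̄/x̄}]`. -/
def valStateOf (fc : ℕ → ℕ) (w s : Tm) : GState :=
  GState.val (Tm.fsubstPaired fc w.stripLams.1 s.stripLams.1 w.stripLams.2)
    (Tm.fsubst fc s.stripLams.1 s.stripLams.2)

/-- The moves of the tree-checking game (Figure 2 of the paper); `m` is the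
index of the source position. -/
inductive GMove (T : TTree) (fc : ℕ → ℕ) (m : ℕ) : GPos → MoveKind → GPos → Prop
  | A1 (n : List ℕ) (xs : List (ℕ × Ty)) (ls : List Tm) (r : Tm)
      (θ : Theta) (ξ : Xi) (a : ℕ) :
      T.labelAt? n = some (.lam xs) → ls.length = xs.length →
      T.labelAt? (n ++ [0]) = some (.const a Ty.base) →
      GMove T fc m ⟨n, .arg ls r, θ, ξ⟩ .A1
        ⟨n ++ [0], if r = Tm.const a Ty.base then .finE else .finA,
          θ.updates (aUpd xs ls ξ m), ξ⟩
  | A2 (n : List ℕ) (xs : List (ℕ × Ty)) (ls : List Tm) (r : Tm)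
      (θ : Theta) (ξ : Xi) (f : ℕ) (A : Ty) (ss : List Tm) :
      T.labelAt? n = some (.lam xs) → ls.length = xs.length →
      T.labelAt? (n ++ [0]) = some (.const f A) → A ≠ Ty.base →
      r.headArgs = (Tm.const f A, ss) →
      GMove T fc m ⟨n, .arg ls r, θ, ξ⟩ .A2
        ⟨n ++ [0], .emp r, θ.updates (aUpd xs ls ξ m), ξ⟩
  | A2f (n : List ℕ) (xs : List (ℕ × Ty)) (ls : List Tm) (r : Tm)
      (θ : Theta) (ξ : Xi) (f : ℕ) (A : Ty) :
      T.labelAt? n = some (.lam xs) → ls.length = xs.length →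
      T.labelAt? (n ++ [0]) = some (.const f A) → A ≠ Ty.base →
      r.headArgs.1 ≠ Tm.const f A →
      GMove T fc m ⟨n, .arg ls r, θ, ξ⟩ .A2
        ⟨n ++ [0], .finA, θ.updates (aUpd xs ls ξ m), ξ⟩
  | A3 (n : List ℕ) (xs : List (ℕ × Ty)) (ls : List Tm) (r : Tm)
      (θ : Theta) (ξ ξ₀ : Xi) (y : ℕ) (B : Ty) (l : Tm) (i : ℕ) :
      T.labelAt? n = some (.lam xs) → ls.length = xs.length →
      T.labelAt? (n ++ [0]) = some (.var y B) →
      (θ.updates (aUpd xs ls ξ m)).look y = some (l, ξ₀, i) →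
      GMove T fc m ⟨n, .arg ls r, θ, ξ⟩ .A3
        ⟨n ++ [0], .val l r, θ.updates (aUpd xs ls ξ m), ξ₀⟩
  | B1 (n : List ℕ) (f : ℕ) (A : Ty) (r : Tm) (ss : List Tm)
      (θ : Theta) (ξ : Xi) (d : ℕ) (sd : Tm) :
      T.labelAt? n = some (.const f A) →
      r.headArgs = (Tm.const f A, ss) → ss[d]? = some sd →
      GMove T fc m ⟨n, .emp r, θ, ξ⟩ .B1 ⟨n ++ [d], argStateOf fc sd, θ, ξ⟩
  | C1 (n : List ℕ) (y : ℕ) (B : Ty) (l r : Tm) (θ : Theta) (ξ : Xi) (a : ℕ) :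
      T.labelAt? n = some (.var y B) →
      l.stripLams.2 = Tm.const a Ty.base →
      GMove T fc m ⟨n, .val l r, θ, ξ⟩ .C1
        ⟨n, if r = Tm.const a Ty.base then .finE else .finA, θ,
          ξ.updates (cUpd n l.stripLams.1 θ m)⟩
  | C2 (n : List ℕ) (y : ℕ) (B : Ty) (r : Tm) (θ : Theta) (ξ : Xi)
      (c : ℕ) (A : Ty) (ss : List Tm) (d : ℕ) (sd : Tm) :
      T.labelAt? n = some (.var y B) → A ≠ Ty.base →
      r.headArgs = (Tm.const c A, ss) → ss[d]? = some sd →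
      GMove T fc m ⟨n, .val (Tm.const c A) r, θ, ξ⟩ .C2
        ⟨n ++ [d], argStateOf fc sd, θ, ξ⟩
  | C2f (n : List ℕ) (y : ℕ) (B : Ty) (r : Tm) (θ : Theta) (ξ : Xi)
      (c : ℕ) (A : Ty) :
      T.labelAt? n = some (.var y B) → A ≠ Ty.base →
      r.headArgs.1 ≠ Tm.const c A →
      GMove T fc m ⟨n, .val (Tm.const c A) r, θ, ξ⟩ .C2 ⟨n, .finA, θ, ξ⟩
  | C3 (n : List ℕ) (y : ℕ) (B : Ty) (l r : Tm) (θ : Theta) (ξ : Xi)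
      (f : ℕ) (A : Ty) (ws ss : List Tm) (d : ℕ) (wd sd : Tm) :
      T.labelAt? n = some (.var y B) →
      (l.stripLams.2).headArgs = (Tm.const f A, ws) → ws ≠ [] →
      r.headArgs = (Tm.const f A, ss) → ws[d]? = some wd → ss[d]? = some sd →
      GMove T fc m ⟨n, .val l r, θ, ξ⟩ .C3
        ⟨n, valStateOf fc wd sd, θ, ξ.updates (cUpd n l.stripLams.1 θ m)⟩
  | C3f (n : List ℕ) (y : ℕ) (B : Ty) (l r : Tm) (θ : Theta) (ξ : Xi)
      (f : ℕ) (A : Ty) (ws : List Tm) :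
      T.labelAt? n = some (.var y B) →
      (l.stripLams.2).headArgs = (Tm.const f A, ws) → ws ≠ [] →
      r.headArgs.1 ≠ Tm.const f A →
      GMove T fc m ⟨n, .val l r, θ, ξ⟩ .C3
        ⟨n, .finA, θ, ξ.updates (cUpd n l.stripLams.1 θ m)⟩
  | C4 (n : List ℕ) (y : ℕ) (B : Ty) (l r : Tm) (θ θ₀ : Theta) (ξ : Xi)
      (x : ℕ) (C : Ty) (ws : List Tm) (n' : List ℕ) (i : ℕ) :
      T.labelAt? n = some (.var y B) →
      (l.stripLams.2).headArgs = (Tm.var x C, ws) →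
      (ξ.updates (cUpd n l.stripLams.1 θ m)).look x = some (n', θ₀, i) →
      GMove T fc m ⟨n, .val l r, θ, ξ⟩ .C4
        ⟨n', .arg ws r, θ₀, ξ.updates (cUpd n l.stripLams.1 θ m)⟩

/-! ## Plays of the tree-checking game -/

/-- A play of the game `G(t,P)`: a finite sequence of positions
`π(1),…,π(len)` starting at the root of the term tree with an initial state
chosen from a (dis)equation of `P`, proceeding by the game moves and ending at
the first final state.  `mv j` records which move produced position `j`. -/
structure Play (T : TTree) (P : DIProblem) : Type where
  len : ℕ
  pos : ℕ → GPos
  mv : ℕ → MoveKind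
  one_le : 1 ≤ len
  init_node : (pos 1).node = []
  init_th : (pos 1).th = Theta.empty
  init_xi : (pos 1).xi = Xi.empty
  init_st : ∃ e ∈ P.eqns, (pos 1).st = GState.arg e.args e.rhs
  steps : ∀ m, 1 ≤ m → m < len → GMove T P.fc m (pos m) (mv (m + 1)) (pos (m + 1))
  final_iff : ∀ m, 1 ≤ m → m ≤ len → ((pos m).st.IsFinal ↔ m = len)

namespace Play

variable {T : TTree} {P : DIProblem}

/-- The sequence of positions of a play. -/
def trace (π : Play T P) : List GPos := (List.range π.len).map fun i => π.pos (i + 1)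

/-- The refuter `∀` wins the play. -/
def AWins (π : Play T P) : Prop := (π.pos π.len).st = GState.finA

/-- The initial state of the play is the one given by the (dis)equation `e`. -/
def startsFrom (π : Play T P) (e : DIEqn) : Prop :=
  (π.pos 1).st = GState.arg e.args e.rhs

/-- `π.child j i`: position `π(j)` is a child of position `π(i)`
(Definition 4.10). -/
def child (π : Play T P) (j i : ℕ) : Prop :=
  i < j ∧ j < π.len ∧
  (((π.mv j = .A2 ∨ π.mv j = .B1 ∨ π.mv j = .C2 ∨ π.mv j = .C3) ∧ i = j - 1) ∨
   (π.mv j = .A3 ∧ ∃ y B l ξ', T.labelAt? (π.pos j).node = some (.var y B) ∧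
      (π.pos j).th.look y = some (l, ξ', i)) ∨
   (π.mv j = .C4 ∧ ∃ l r x C, (π.pos (j - 1)).st = GState.val l r ∧
      (l.stripLams.2).headArgs.1 = Tm.var x C ∧
      (π.pos j).xi.look x = some ((π.pos j).node, (π.pos j).th, i)))

/-- `π(j)` is a descendent of `π(i)`: the reflexive-transitive closure of the
child relation. -/
def desc (π : Play T P) : ℕ → ℕ → Prop := Relation.ReflTransGen π.child

/-- The interval `π(i,j)` is right-term invariant. -/
def ri (π : Play T P) (i j : ℕ) : Prop :=
  ∃ r, (π.pos i).st.rhs? = some r ∧ (π.pos j).st.rhs? = some r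

/-- The interval `π(i,j)` is nri: not ri, and `π(j)` is not final. -/
def nri (π : Play T P) (i j : ℕ) : Prop := ¬ π.ri i j ∧ ¬ (π.pos j).st.IsFinal

end Play

/-- Definition 4.5: the refuter `∀` loses the game `G(t,P)`. -/
def RefuterLoses (T : TTree) (P : DIProblem) : Prop :=
  (∀ e ∈ P.eqns, e.pos = true → ∀ π : Play T P, π.startsFrom e → ¬ π.AWins) ∧
  (∀ e ∈ P.eqns, e.pos = false → ∃ π : Play T P, π.startsFrom e ∧ π.AWins)

/-- The number of (distinct) plays of the game `G(t,P)`. -/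
noncomputable def numPlays (T : TTree) (P : DIProblem) : ℕ :=
  Nat.card { tr : List GPos // ∃ π : Play T P, π.trace = tr }

/-! ## Tiles -/

/-- The shape of a (composite) tile: for each atomic leaf of the root simple
tile, optionally a tile placed directly beneath it.  An occurrence of a tile in
a term tree is a pair of a path (the root head node) and a shape. -/
inductive Tile : Type
  | mk : List (Option Tile) → Tile

def Tile.subs : Tile → List (Option Tile)
  | .mk s => s

/-- The trivial simple-tile shape of a head node of a tree. -/
def TTree.simpleTile (t : TTree) : Tile := Tile.mk (List.replicate t.children.length none)

/-- The tile occurrence `(p, τ)` is a valid region of the term tree `T`. -/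
inductive TileValid (T : TTree) : List ℕ → Tile → Prop
  | mk (p : List ℕ) (subs : List (Option Tile)) (t' : TTree) :
      T.at? p = some t' → t'.label.isHeadLabel → subs.length = t'.children.length →
      (∀ i τ', subs[i]? = some (some τ') → TileValid T (p ++ [i, 0]) τ') →
      TileValid T p (.mk subs)

/-- The head nodes of a tile occurrence. -/
inductive TileHead (T : TTree) : List ℕ → Tile → List ℕ → Prop
  | root (p : List ℕ) (subs : List (Option Tile)) : TileHead T p (.mk subs) p
  | sub (p : List ℕ) (subs : List (Option Tile)) (i : ℕ) (τ' : Tile) (q : List ℕ) :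
      subs[i]? = some (some τ') → TileHead T (p ++ [i, 0]) τ' q →
      TileHead T p (.mk subs) q

/-- The λ-nodes of a tile occurrence. -/
inductive TileLam (T : TTree) : List ℕ → Tile → List ℕ → Prop
  | lam (p : List ℕ) (subs : List (Option Tile)) (i : ℕ) :
      i < subs.length → TileLam T p (.mk subs) (p ++ [i])
  | sub (p : List ℕ) (subs : List (Option Tile)) (i : ℕ) (τ' : Tile) (q : List ℕ) :
      subs[i]? = some (some τ') → TileLam T (p ++ [i, 0]) τ' q →
      TileLam T p (.mk subs) q

/-- The atomic leaves of a tile occurrence. -/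
inductive TileLeaf (T : TTree) : List ℕ → Tile → List ℕ → Prop
  | leaf (p : List ℕ) (subs : List (Option Tile)) (i : ℕ) :
      subs[i]? = some none → TileLeaf T p (.mk subs) (p ++ [i])
  | sub (p : List ℕ) (subs : List (Option Tile)) (i : ℕ) (τ' : Tile) (q : List ℕ) :
      subs[i]? = some (some τ') → TileLeaf T (p ++ [i, 0]) τ' q →
      TileLeaf T p (.mk subs) q

/-- All nodes of a tile occurrence. -/
def TileNodeAll (T : TTree) (p : List ℕ) (τ : Tile) (q : List ℕ) : Prop :=
  TileHead T p τ q ∨ TileLam T p τ q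

/-- `y` is bound by some λ-node of the tile. -/
def TileBindsName (T : TTree) (p : List ℕ) (τ : Tile) (y : ℕ) : Prop :=
  ∃ q xs, TileLam T p τ q ∧ T.labelAt? q = some (.lam xs) ∧ y ∈ xs.map Prod.fst

/-- There is an occurrence, at node `q` of the tile, of the variable `y` free
in the tile. -/
def TileFreeVarAt (T : TTree) (p : List ℕ) (τ : Tile) (q : List ℕ) (y : ℕ) : Prop :=
  TileHead T p τ q ∧ (∃ A, T.labelAt? q = some (.var y A)) ∧
  ∀ t', T.at? p = some t' → y ∉ t'.bindersAlong (q.drop p.length)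

/-- There is an occurrence, at node `q` of the tile, of the constant `c`. -/
def TileConstAt (T : TTree) (p : List ℕ) (τ : Tile) (q : List ℕ) (c : ℕ) : Prop :=
  TileHead T p τ q ∧ ∃ A, T.labelAt? q = some (.const c A)

/-- A basic tile: exactly one occurrence of a free variable and no constants,
or exactly one occurrence of a constant and no free variables. -/
def BasicTile (T : TTree) (p : List ℕ) (τ : Tile) : Prop :=
  TileValid T p τ ∧
    (((∃! q : List ℕ, ∃ y : ℕ, TileFreeVarAt T p τ q y) ∧
        ¬ ∃ q c, TileConstAt T p τ q c) ∨
     ((∃! q : List ℕ, ∃ c : ℕ, TileConstAt T p τ q c) ∧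
        ¬ ∃ q y, TileFreeVarAt T p τ q y))

/-- A top tile: a basic tile with a free variable occurrence bound by the
initial λ of the term tree. -/
def TopTile (T : TTree) (p : List ℕ) (τ : Tile) : Prop :=
  BasicTile T p τ ∧ ∃ q y xs, TileFreeVarAt T p τ q y ∧
    T.label = TLabel.lam xs ∧ y ∈ xs.map Prod.fst

/-- `γ` (rooted at `pγ`) is below the atomic leaf `q` of `τ`: there is a path
of successors from `q` to `pγ`. -/
def TileBelowAt (T : TTree) (p : List ℕ) (τ : Tile) (q pγ : List ℕ) : Prop :=
  TileLeaf T p τ q ∧ q <+: pγ ∧ q ≠ pγ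

/-- `γ` is an immediate dependent of `τ` below the atomic leaf `q` of `τ`:
it is below `q` and contains a free variable bound in `τ`. -/
def ImmDependentAt (T : TTree) (p : List ℕ) (τ : Tile) (q pγ : List ℕ) (γ : Tile) :
    Prop :=
  BasicTile T pγ γ ∧ TileBelowAt T p τ q pγ ∧
  ∃ q' y, TileFreeVarAt T pγ γ q' y ∧ TileBindsName T p τ y

/-- `γ` is a dependent of `τ` below the atomic leaf `q` of `τ`. -/
inductive DependentAt (T : TTree) : List ℕ → Tile → List ℕ → List ℕ → Tile → Prop
  | imm (p : List ℕ) (τ : Tile) (q pγ : List ℕ) (γ : Tile) :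
      ImmDependentAt T p τ q pγ γ → DependentAt T p τ q pγ γ
  | trans (p : List ℕ) (τ : Tile) (q p' : List ℕ) (τ' : Tile) (q' pγ : List ℕ)
      (γ : Tile) :
      ImmDependentAt T p τ q p' τ' → DependentAt T p' τ' q' pγ γ →
      DependentAt T p τ q pγ γ

/-- `γ` is a dependent of `τ`. -/
def Dependent (T : TTree) (p : List ℕ) (τ : Tile) (pγ : List ℕ) (γ : Tile) : Prop :=
  ∃ q, DependentAt T p τ q pγ γ

/-- Two tiles belong to the same family. -/
def SameFamily (T : TTree) (p₁ : List ℕ) (τ₁ : Tile) (p₂ : List ℕ) (τ₂ : Tile) : Prop :=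
  Dependent T p₁ τ₁ p₂ τ₂ ∨ Dependent T p₂ τ₂ p₁ τ₁ ∨
  ∃ p' τ', Dependent T p' τ' p₁ τ₁ ∧ Dependent T p' τ' p₂ τ₂

/-- `τ₂` is in the family of tiles associated with `τ₁`. -/
def InFamily (T : TTree) (p₁ : List ℕ) (τ₁ : Tile) (p₂ : List ℕ) (τ₂ : Tile) : Prop :=
  (p₁ = p₂ ∧ τ₁ = τ₂) ∨ SameFamily T p₁ τ₁ p₂ τ₂

/-- `τ` is end at its atomic leaf `q` (j-end): it has no immediate dependents
below `q`. -/
def EndAt (T : TTree) (p : List ℕ) (τ : Tile) (q : List ℕ) : Prop :=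
  TileLeaf T p τ q ∧ ¬ ∃ pγ γ, ImmDependentAt T p τ q pγ γ

/-- An end tile: end at every atomic leaf. -/
def EndTile (T : TTree) (p : List ℕ) (τ : Tile) : Prop :=
  ∀ q, TileLeaf T p τ q → EndAt T p τ q

/-- A constant tile: it contains an occurrence of a constant, or is a
dependent of a constant tile. -/
inductive ConstTile (T : TTree) : List ℕ → Tile → Prop
  | base (p : List ℕ) (τ : Tile) :
      (∃ q c, TileConstAt T p τ q c) → ConstTile T p τ
  | dep (p : List ℕ) (τ : Tile) (p' : List ℕ) (τ' : Tile) :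
      ConstTile T p' τ' → Dependent T p' τ' p τ → ConstTile T p τ

/-- Renaming of labels: bound variables are renamed by `ρ`, the free variable
and the constants are kept. -/
def LabelRen (ρ : ℕ → ℕ) (bound : ℕ → Prop) : TLabel → TLabel → Prop
  | .lam xs, .lam ys => ys = xs.map fun p => (ρ p.1, p.2)
  | .var x A, .var x' A' => A = A' ∧ ((bound x ∧ x' = ρ x) ∨ (¬ bound x ∧ x' = x))
  | .const c A, .const c' A' => c = c' ∧ A = A'
  | _, _ => False

/-- Tile equivalence `τ ≡ γ` (α-equivalence of basic tiles with the same single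
free variable occurrence); corresponding nodes are at the same relative
paths. -/
def TileEquiv (T : TTree) (p : List ℕ) (τ : Tile) (p' : List ℕ) (γ : Tile) : Prop :=
  BasicTile T p τ ∧ BasicTile T p' γ ∧ τ = γ ∧
  ∃ ρ : ℕ → ℕ,
    ∀ q l l', TileNodeAll T p τ q → T.labelAt? q = some l →
      T.labelAt? (p' ++ q.drop p.length) = some l' →
      LabelRen ρ (TileBindsName T p τ) l l'

/-! ## Plays on tiles -/

namespace Play

variable {T : TTree} {P : DIProblem}

/-- `π(i,j)` is a play on the tile occurrence `(p, τ)` ending at its atomic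
leaf `q`, decomposed as the list `cuts` of consecutive plays `(iₗ, jₗ)` on the
simple tiles along the branch of `τ` from its root to `q`. -/
inductive TilePlayCuts (π : Play T P) :
    List ℕ → Tile → List (ℕ × ℕ) → List ℕ → Prop
  | simple (p : List ℕ) (subs : List (Option Tile)) (d i j : ℕ) :
      subs[d]? = some none → (π.pos i).node = p → (π.pos j).node = p ++ [d] →
      π.child j i → TilePlayCuts π p (.mk subs) [(i, j)] (p ++ [d])
  | step (p : List ℕ) (subs : List (Option Tile)) (d i j j₂ : ℕ)
      (cuts : List (ℕ × ℕ)) (q : List ℕ) (τ' : Tile) :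
      subs[d]? = some (some τ') → (π.pos i).node = p →
      (π.pos j).node = p ++ [d] → π.child j i →
      TilePlayCuts π (p ++ [d, 0]) τ' ((j + 1, j₂) :: cuts) q →
      TilePlayCuts π p (.mk subs) ((i, j) :: (j + 1, j₂) :: cuts) q

/-- `π(i,j)` is a play on the tile occurrence `(p, τ)` ending at its atomic
leaf `q`. -/
def TilePlayOn (π : Play T P) (p : List ℕ) (τ : Tile) (i j : ℕ) (q : List ℕ) :
    Prop :=
  ∃ cuts x y, π.TilePlayCuts p τ cuts q ∧ cuts.head? = some x ∧ x.1 = i ∧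
    cuts.getLast? = some y ∧ y.2 = j

/-- A shortest play on `(p, τ)` ending at the leaf `q` (no proper prefix is a
play on `τ` ending at `q`). -/
def ShortestLeafPlay (π : Play T P) (p : List ℕ) (τ : Tile) (i j : ℕ)
    (q : List ℕ) : Prop :=
  π.TilePlayOn p τ i j q ∧ ∀ k, k < j → ¬ π.TilePlayOn p τ i k q

/-- A shortest play on `(p, τ)` (no proper prefix is a play on `τ`). -/
def ShortestPlay (π : Play T P) (p : List ℕ) (τ : Tile) (i j : ℕ) : Prop :=
  (∃ q, π.TilePlayOn p τ i j q) ∧ ∀ k, k < j → ¬ ∃ q, π.TilePlayOn p τ i k q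

/-- The interval `π(i,j)` is internal to the tile `(p, τ)`. -/
def InternalOn (π : Play T P) (p : List ℕ) (τ : Tile) (i j : ℕ) : Prop :=
  ∀ n, i ≤ n → n ≤ j → TileNodeAll T p τ (π.pos n).node

end Play

/-- `τ` is directed towards its atomic leaf `q` (j-directed) with respect to
the interval `π(i,|π|)` (Definition 5.18). -/
inductive DirectedFrom {T : TTree} {P : DIProblem} (π : Play T P)
    (p : List ℕ) (τ : Tile) (q : List ℕ) : ℕ → Prop
  | none (i : ℕ) :
      (∀ m, i ≤ m → m ≤ π.len → (π.pos m).node ≠ p) → DirectedFrom π p τ q i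
  | step (i m n : ℕ) :
      i ≤ m → (π.pos m).node = p →
      (∀ m', i ≤ m' → m' < m → (π.pos m').node ≠ p) →
      π.ShortestLeafPlay p τ m n q → π.ri m n →
      DirectedFrom π p τ q (n + 1) → DirectedFrom π p τ q i

/-- `τ` is directed towards its atomic leaf `q` (j-directed) with respect to
the game `G(t,P)`. -/
def DirectedWrtGame (T : TTree) (P : DIProblem) (p : List ℕ) (τ : Tile)
    (q : List ℕ) : Prop :=
  ∀ π : Play T P, DirectedFrom π p τ q 1

/-! ## b-partitions, variation and correspondence -/

namespace Play

variable {T : TTree} {P : DIProblem}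

/-- The b-partition for the position `π(j)` at a λ-node (Definition 6.14):
`js = [j₀, j₁, …, jₙ]` with `j₀ = 1`, `jₙ = j` and, for each `m`, the interval
`π(jₘ₋₁ + 1, jₘ)` is a play on the `m`-th simple tile along the branch from the
root of the term tree to the node of `π(j)`, ending at the `m`-th λ-node of
that branch. -/
def IsBPartition (π : Play T P) (j : ℕ) (js : List ℕ) : Prop :=
  js.length = (π.pos j).node.length / 2 + 1 ∧ js[0]? = some 1 ∧
  js[(π.pos j).node.length / 2]? = some j ∧
  ∀ m, 1 ≤ m → m ≤ (π.pos j).node.length / 2 →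
    ∀ a b, js[m - 1]? = some a → js[m]? = some b →
      (π.pos (a + 1)).node = (π.pos j).node.take (2 * m - 1) ∧
      (π.pos b).node = (π.pos j).node.take (2 * m) ∧ π.child b (a + 1)

/-- Positions `π(j)`, `π(j')` vary at `π(jk)`, `π(j'k)` with the simple tile
rooted at the path `pτ` (Definition 8.4): they are at the same λ-node and `pτ`
is the head of the first simple tile in their b-partitions at which the two
plays differ. -/
def VaryAt (π : Play T P) (j j' jk j'k : ℕ) (pτ : List ℕ) : Prop :=
  (π.pos j).node = (π.pos j').node ∧ j ≠ j' ∧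
  ∃ js js' k, π.IsBPartition j js ∧ π.IsBPartition j' js' ∧ 1 ≤ k ∧
    (∀ m, m < k → js[m]? = js'[m]?) ∧
    js[k]? = some jk ∧ js'[k]? = some j'k ∧ jk ≠ j'k ∧
    pτ = (π.pos j).node.take (2 * k - 1)

/-- The intervals `π(i,j)` and `π(i',j')` correspond (Definition 8.3): they
have the same length, visit the same nodes and have states of the same kind
with the same left terms (the right terms may differ). -/
def corr (π : Play T P) (i j i' j' : ℕ) : Prop :=
  j < π.len ∧ j' < π.len ∧ i ≤ j ∧ i' ≤ j' ∧ j - i = j' - i' ∧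
  ∀ k, k ≤ j - i →
    (π.pos (i + k)).node = (π.pos (i' + k)).node ∧
    (∀ l r, (π.pos (i + k)).st = GState.val l r →
      ∃ r', (π.pos (i' + k)).st = GState.val l r') ∧
    (∀ ls r, (π.pos (i + k)).st = GState.arg ls r →
      ∃ r', (π.pos (i' + k)).st = GState.arg ls r') ∧
    (∀ r, (π.pos (i + k)).st = GState.emp r →
      ∃ r', (π.pos (i' + k)).st = GState.emp r')

end Play

/-- No simple tile headed by an occurrence of the variable `y` is a dependent
of the tile `(pτ, τ)`. -/
def NotDependentHead (T : TTree) (pτ : List ℕ) (τ : Tile) (y : ℕ) : Prop :=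
  ∀ q A t', T.labelAt? q = some (TLabel.var y A) → T.at? q = some t' →
    ¬ Dependent T pτ τ q t'.simpleTile

mutual
  /-- Look-up tables `n`-similar except for the tile `(pτ, τ)`
  (Definition 8.6). -/
  def ThetaSim (T : TTree) (pτ : List ℕ) (τ : Tile) : ℕ → Theta → Theta → Prop
    | 0, θ, θ' => θ = θ'
    | n + 1, θ, θ' =>
        (∀ y, (θ.look y).isSome = (θ'.look y).isSome) ∧
        (∀ y l ξ i, NotDependentHead T pτ τ y → θ.look y = some (l, ξ, i) →
          ∃ ξ' i', θ'.look y = some (l, ξ', i') ∧ XiSim T pτ τ n ξ ξ')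
  def XiSim (T : TTree) (pτ : List ℕ) (τ : Tile) : ℕ → Xi → Xi → Prop
    | 0, ξ, ξ' => ξ = ξ'
    | n + 1, ξ, ξ' =>
        (∀ z, (ξ.look z).isSome = (ξ'.look z).isSome) ∧
        (∀ z t θ i, ξ.look z = some (t, θ, i) →
          ∃ θ' i', ξ'.look z = some (t, θ', i') ∧ ThetaSim T pτ τ n θ θ')
end

/-- Look-up tables similar except for the tile `(pτ, τ)`: `θ ∼τ θ'`. -/
def ThetaSimA (T : TTree) (pτ : List ℕ) (τ : Tile) (θ θ' : Theta) : Prop :=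
  ∃ n, ThetaSim T pτ τ n θ θ'

/-! ## The transformations T1 and T2 -/

/-- Replace the subtree at a path. -/
def TTree.replaceAt : TTree → List ℕ → TTree → TTree
  | _, [], u => u
  | .node l cs, i :: p, u =>
      .node l (cs.mapIdx fun j c => if j = i then TTree.replaceAt c p u else c)

/-- The game `G(t,P)` avoids the subtree at path `p`. -/
def AvoidedBy (T : TTree) (P : DIProblem) (p : List ℕ) : Prop :=
  ∀ π : Play T P, ∀ i, 1 ≤ i → i ≤ π.len → (π.pos i).node ≠ p

/-- Transformation T1: if every play avoids the subtree rooted at `p` (whose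
root is labelled with a variable or a higher-order constant), replace it by a
single node labelled with a fresh base-type constant `d`. -/
def T1Rel (P : DIProblem) (T T' : TTree) : Prop :=
  ∃ (p : List ℕ) (t' : TTree) (d : ℕ),
    T.at? p = some t' ∧
    ((∃ y B, t'.label = TLabel.var y B) ∨
      (∃ f B, t'.label = TLabel.const f B ∧ B ≠ Ty.base)) ∧
    AvoidedBy T P p ∧
    d ∉ P.forb ∧ (∀ e ∈ P.eqns, d ∉ e.rhs.consts) ∧
    T' = T.replaceAt p (TTree.node (TLabel.const d Ty.base) [])

/-- Transformation T2: if the basic tile `(p, τ)` is end at its atomic leaf `q`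
and directed towards `q` with respect to the game, replace the subtree rooted
at `τ` by the subtree directly beneath `q`. -/
def T2Rel (P : DIProblem) (T T' : TTree) : Prop :=
  ∃ (p q : List ℕ) (τ : Tile) (sub : TTree),
    BasicTile T p τ ∧ EndAt T p τ q ∧ DirectedWrtGame T P p τ q ∧
    T.at? (q ++ [0]) = some sub ∧
    T' = T.replaceAt p sub

/-- `T` (as a tree) solves `P`: it represents a term `t` with `t ⊨ P`. -/
def TSolves (P : DIProblem) (T : TTree) : Prop := ∃ t, Represents T t ∧ Solves P t

/-! ## Size measures -/

/-- A head node with at least one successor: a simple tile with atomic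
leaves. -/
def TTree.headWithChildren : TTree → Bool
  | .node (.lam _) _ => false
  | .node _ [] => false
  | .node _ (_ :: _) => true

/-- The number of simple tiles with atomic leaves along a path. -/
def TTree.tilesOnPath : TTree → List ℕ → ℕ
  | t, [] => if t.headWithChildren then 1 else 0
  | t, i :: p =>
      (if t.headWithChildren then 1 else 0) +
      match t.children[i]? with
      | some c => TTree.tilesOnPath c p
      | none => 0

/-- `|t|`: the number of simple tiles with atomic leaves in a longest branch. -/
noncomputable def TTree.branchTilesMax (T : TTree) : ℕ :=
  sSup { n : ℕ | ∃ p : List ℕ, (T.at? p).isSome = true ∧ TTree.tilesOnPath T p = n }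

/-- `‖t‖`: the total number of simple tiles with atomic leaves. -/
noncomputable def TTree.totalTiles (T : TTree) : ℕ :=
  Nat.card { p : List ℕ // ∃ t', T.at? p = some t' ∧ t'.headWithChildren = true }

/-- A top simple tile: a simple tile whose head variable is bound by the
initial λ of the term tree. -/
def IsTopSimpleTile (T : TTree) (p : List ℕ) : Prop :=
  ∃ t' y A xs, T.at? p = some t' ∧ t'.label = TLabel.var y A ∧
    t'.children ≠ [] ∧ T.label = TLabel.lam xs ∧ y ∈ xs.map Prod.fst

/-- The tower function of Theorem 9.3: `g 1 = 1` and `g (k+1) = (α+1)^(g k)`. -/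
def gfun (α : ℕ) : ℕ → ℕ
  | 0 => 1
  | 1 => 1
  | k + 2 => (α + 1) ^ gfun α (k + 1)

/-! ## Statement 9: two plays on a basic tile from the same position
(Corollary 6.18) -/

section AuxLemmas

open Play

variable {T : TTree} {P : DIProblem}

/-- membership from `getLast?`. -/
theorem mem_of_getLast?' {α : Type _} : ∀ {l : List α} {a : α}, l.getLast? = some a → a ∈ l := by
  intro l
  induction l with
  | nil => intro a h; simp at h
  | cons hd tl ih =>
    intro a h
    cases tl with
    | nil => simp at h; simp [h]
    | cons b tl' =>
      rw [List.getLast?_cons_cons] at h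
      exact List.mem_cons_of_mem _ (ih h)

theorem mem_of_lookup' {β : Type _} : ∀ {l : List (ℕ × β)} {a : ℕ} {b : β},
    l.lookup a = some b → (a, b) ∈ l := by
  intro l
  induction l with
  | nil => intro a b h; simp [List.lookup] at h
  | cons hd tl ih =>
    intro a b h
    obtain ⟨k, v⟩ := hd
    by_cases hk : k = a
    · subst hk
      rw [List.lookup] at h
      simp only [beq_self_eq_true] at h
      cases h; exact List.mem_cons_self
    · have hkb : (a == k) = false := beq_eq_false_iff_ne.mpr (Ne.symm hk)
      rw [List.lookup] at h
      simp only [hkb] at h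
      exact List.mem_cons_of_mem _ (ih h)

theorem theta_look_updates (θ : Theta) (L : List (ℕ × (Tm × Xi × ℕ))) (y : ℕ) :
    (θ.updates L).look y = (match L.lookup y with
      | some v => some (v.1, v.2.1, v.2.2)
      | none => θ.look y) := by
  cases hl : L.lookup y <;> simp [Theta.updates, Theta.look, Theta.fn, hl]

theorem xi_look_updates (ξ : Xi) (L : List (ℕ × (List ℕ × Theta × ℕ))) (z : ℕ) :
    (ξ.updates L).look z = (match L.lookup z with
      | some v => some (v.1, v.2.1, v.2.2)
      | none => ξ.look z) := by
  cases hl : L.lookup z <;> simp [Xi.updates, Xi.look, Xi.fn, hl]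

theorem theta_look_empty (y : ℕ) : Theta.empty.look y = none := rfl

theorem aUpd_lookup {xs : List (ℕ × Ty)} {ls : List Tm} {ξ : Xi} {w y : ℕ}
    {v : Tm × Xi × ℕ} (h : (aUpd xs ls ξ w).lookup y = some v) :
    v.2.1 = ξ ∧ v.2.2 = w := by
  have hm := mem_of_lookup' h
  unfold aUpd at hm
  rcases List.mem_map.1 hm with ⟨pp, _, hpq⟩
  have h2 : (pp.2, ξ, w) = v := congrArg Prod.snd hpq
  rw [← h2]
  exact ⟨rfl, rfl⟩

theorem cUpd_lookup {nn : List ℕ} {zs : List (ℕ × Ty)} {θ : Theta} {w z : ℕ}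
    {v : List ℕ × Theta × ℕ} (h : (cUpd nn zs θ w).lookup z = some v) :
    v.2.1 = θ ∧ v.2.2 = w := by
  have hm := mem_of_lookup' h
  unfold cUpd at hm
  rcases List.mem_map.1 hm with ⟨pp, _, hpq⟩
  have h2 : (nn ++ [pp.2], θ, w) = v := congrArg Prod.snd hpq
  rw [← h2]
  exact ⟨rfl, rfl⟩

theorem isFinal_ite (c : Prop) [Decidable c] :
    ((if c then GState.finE else GState.finA)).IsFinal := by
  split <;> trivial

theorem nonfinal (π : Play T P) {w : ℕ} (h1 : 1 ≤ w) (h2 : w < π.len) :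
    ¬ (π.pos w).st.IsFinal := by
  intro h
  have := (π.final_iff w h1 (le_of_lt h2)).1 h
  omega

end AuxLemmas
section TablesOK

open Play

variable {T : TTree} {P : DIProblem}

/-- Invariant on `θ` tables: every entry was created at an `A`-move. -/
def thOK (π : Play T P) (w : ℕ) : Prop :=
  ∀ y l ξs u, ((π.pos w).th.look y = some (l, ξs, u)) →
    1 ≤ u ∧ u < w ∧ ξs = (π.pos u).xi ∧
    (∃ xs, T.labelAt? (π.pos u).node = some (.lam xs)) ∧
    (∃ ls r, (π.pos u).st = GState.arg ls r)

/-- Invariant on `ξ` tables: every entry was created at a `C`-move. -/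
def xiOK (π : Play T P) (w : ℕ) : Prop :=
  ∀ z n' θs u, ((π.pos w).xi.look z = some (n', θs, u)) →
    1 ≤ u ∧ u < w ∧ θs = (π.pos u).th ∧
    (∃ l r, (π.pos u).st = GState.val l r)

theorem thOK_of_eq {π : Play T P} {v w : ℕ} (h : thOK π v) (hvw : v ≤ w)
    (heq : (π.pos w).th = (π.pos v).th) : thOK π w := by
  intro y l ξs u hl
  rw [heq] at hl
  obtain ⟨h1, h2, h3, h4, h5⟩ := h y l ξs u hl
  exact ⟨h1, by omega, h3, h4, h5⟩

theorem xiOK_of_eq {π : Play T P} {v w : ℕ} (h : xiOK π v) (hvw : v ≤ w)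
    (heq : (π.pos w).xi = (π.pos v).xi) : xiOK π w := by
  intro z n' θs u hl
  rw [heq] at hl
  obtain ⟨h1, h2, h3, h4⟩ := h z n' θs u hl
  exact ⟨h1, by omega, h3, h4⟩

theorem tablesOK (π : Play T P) : ∀ w, 1 ≤ w → w ≤ π.len → thOK π w ∧ xiOK π w := by
  intro w
  induction w using Nat.strong_induction_on with
  | _ w IH =>
    intro hw1 hwlen
    match w, hw1 with
    | 1, _ =>
      constructor
      · intro y l ξs u hl
        rw [π.init_th] at hl
        simp [theta_look_empty] at hl
      · intro z n' θs u hl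
        rw [π.init_xi] at hl
        simp [Xi.empty, Xi.look, Xi.fn] at hl
    | (v+1), _ =>
      by_cases hv1 : 1 ≤ v
      case neg =>
        interval_cases v
        · constructor
          · intro y l ξs u hl; rw [π.init_th] at hl; simp [theta_look_empty] at hl
          · intro z n' θs u hl; rw [π.init_xi] at hl; simp [Xi.empty, Xi.look, Xi.fn] at hl
      case pos =>
      have hvlen : v < π.len := by omega
      have hIHv := IH v (by omega) hv1 (by omega)
      have hmv := π.steps v hv1 hvlen
      generalize hs : π.pos v = s at hmv
      generalize hk : π.mv (v+1) = k at hmv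
      generalize hd : π.pos (v+1) = d at hmv
      -- helper facts
      have hthv : (π.pos v).th = s.th := by rw [hs]
      have hxiv : (π.pos v).xi = s.xi := by rw [hs]
      cases hmv with
      | A1 n xs ls r θ ξ a hlam hlen hconst =>
        constructor
        · -- θ updated with aUpd at index v
          intro y l ξs u hl
          rw [hd] at hl; simp only at hl
          rw [theta_look_updates] at hl
          cases hlk : (aUpd xs ls ξ v).lookup y with
          | some vv =>
            rw [hlk] at hl; simp only [Option.some.injEq] at hl
            obtain ⟨he1, he2⟩ := aUpd_lookup hlk
            have hξ : ξs = vv.2.1 := by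
              have := congrArg (fun t => t.2.1) hl; simpa using this.symm
            have hu : u = vv.2.2 := by
              have := congrArg (fun t => t.2.2) hl; simpa using this.symm
            have huv : u = v := hu.trans he2
            refine ⟨by omega, by omega, ?_, ⟨xs, by rw [huv, hs]; exact hlam⟩,
              ⟨ls, r, by rw [huv, hs]⟩⟩
            rw [hξ, he1, huv, hs]
          | none =>
            rw [hlk] at hl; simp only at hl
            have := hIHv.1 y l ξs u (by rw [hthv]; exact hl)
            exact ⟨this.1, by omega, this.2.2⟩
        · intro z n' θs u hl
          rw [hd] at hl; simp only at hl
          have := hIHv.2 z n' θs u (by rw [hxiv]; exact hl)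
          exact ⟨this.1, by omega, this.2.2⟩
      | A2 n xs ls r θ ξ f A ss hlam hlen hconst hA hha =>
        constructor
        · intro y l ξs u hl
          rw [hd] at hl; simp only at hl
          rw [theta_look_updates] at hl
          cases hlk : (aUpd xs ls ξ v).lookup y with
          | some vv =>
            rw [hlk] at hl; simp only [Option.some.injEq] at hl
            obtain ⟨he1, he2⟩ := aUpd_lookup hlk
            have hξ : ξs = vv.2.1 := by
              have := congrArg (fun t => t.2.1) hl; simpa using this.symm
            have hu : u = vv.2.2 := by
              have := congrArg (fun t => t.2.2) hl; simpa using this.symm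
            have huv : u = v := hu.trans he2
            refine ⟨by omega, by omega, ?_, ⟨xs, by rw [huv, hs]; exact hlam⟩,
              ⟨ls, r, by rw [huv, hs]⟩⟩
            rw [hξ, he1, huv, hs]
          | none =>
            rw [hlk] at hl; simp only at hl
            have := hIHv.1 y l ξs u (by rw [hthv]; exact hl)
            exact ⟨this.1, by omega, this.2.2⟩
        · intro z n' θs u hl
          rw [hd] at hl; simp only at hl
          have := hIHv.2 z n' θs u (by rw [hxiv]; exact hl)
          exact ⟨this.1, by omega, this.2.2⟩
      | A2f n xs ls r θ ξ f A hlam hlen hconst hA hha =>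
        constructor
        · intro y l ξs u hl
          rw [hd] at hl; simp only at hl
          rw [theta_look_updates] at hl
          cases hlk : (aUpd xs ls ξ v).lookup y with
          | some vv =>
            rw [hlk] at hl; simp only [Option.some.injEq] at hl
            obtain ⟨he1, he2⟩ := aUpd_lookup hlk
            have hξ : ξs = vv.2.1 := by
              have := congrArg (fun t => t.2.1) hl; simpa using this.symm
            have hu : u = vv.2.2 := by
              have := congrArg (fun t => t.2.2) hl; simpa using this.symm
            have huv : u = v := hu.trans he2
            refine ⟨by omega, by omega, ?_, ⟨xs, by rw [huv, hs]; exact hlam⟩,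
              ⟨ls, r, by rw [huv, hs]⟩⟩
            rw [hξ, he1, huv, hs]
          | none =>
            rw [hlk] at hl; simp only at hl
            have := hIHv.1 y l ξs u (by rw [hthv]; exact hl)
            exact ⟨this.1, by omega, this.2.2⟩
        · intro z n' θs u hl
          rw [hd] at hl; simp only at hl
          have := hIHv.2 z n' θs u (by rw [hxiv]; exact hl)
          exact ⟨this.1, by omega, this.2.2⟩
      | A3 n xs ls r θ ξ ξ₀ y' B l' i' hlam hlen hvar hlook =>
        constructor
        · intro y l ξs u hl
          rw [hd] at hl; simp only at hl
          rw [theta_look_updates] at hl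
          cases hlk : (aUpd xs ls ξ v).lookup y with
          | some vv =>
            rw [hlk] at hl; simp only [Option.some.injEq] at hl
            obtain ⟨he1, he2⟩ := aUpd_lookup hlk
            have hξ : ξs = vv.2.1 := by
              have := congrArg (fun t => t.2.1) hl; simpa using this.symm
            have hu : u = vv.2.2 := by
              have := congrArg (fun t => t.2.2) hl; simpa using this.symm
            have huv : u = v := hu.trans he2
            refine ⟨by omega, by omega, ?_, ⟨xs, by rw [huv, hs]; exact hlam⟩,
              ⟨ls, r, by rw [huv, hs]⟩⟩
            rw [hξ, he1, huv, hs]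
          | none =>
            rw [hlk] at hl; simp only at hl
            have := hIHv.1 y l ξs u (by rw [hthv]; exact hl)
            exact ⟨this.1, by omega, this.2.2⟩
        · -- ξ at v+1 is ξ₀: either the current ξ (new entry) or xi at an older index
          intro z n' θs u hl
          rw [hd] at hl; simp only at hl
          -- analyze hlook
          rw [theta_look_updates] at hlook
          cases hlk : (aUpd xs ls ξ v).lookup y' with
          | some vv =>
            rw [hlk] at hlook; simp only [Option.some.injEq] at hlook
            obtain ⟨he1, he2⟩ := aUpd_lookup hlk
            have hx0 : ξ₀ = ξ := by
              have h2 : ξ₀ = vv.2.1 := by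
                have := congrArg (fun t => t.2.1) hlook; simpa using this.symm
              rw [h2, he1]
            rw [hx0] at hl
            have := hIHv.2 z n' θs u (by rw [hxiv]; exact hl)
            exact ⟨this.1, by omega, this.2.2⟩
          | none =>
            rw [hlk] at hlook; simp only at hlook
            have hold := hIHv.1 y' l' ξ₀ i' (by rw [hthv]; exact hlook)
            obtain ⟨hi1, hiv, hxi0, _, _⟩ := hold
            have := (IH i' (by omega) hi1 (by omega)).2 z n' θs u (by rw [← hxi0]; exact hl)
            exact ⟨this.1, by omega, this.2.2⟩
      | B1 n f A r ss d' sd hconst hha hss =>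
        constructor
        · intro y l ξs u hl
          rw [hd] at hl; simp only at hl
          have := hIHv.1 y l ξs u (by rw [hthv]; exact hl)
          exact ⟨this.1, by omega, this.2.2⟩
        · intro z n' θs u hl
          rw [hd] at hl; simp only at hl
          have := hIHv.2 z n' θs u (by rw [hxiv]; exact hl)
          exact ⟨this.1, by omega, this.2.2⟩
      | C1 n y' B l r a hvar hstrip =>
        constructor
        · intro y l' ξs u hl
          rw [hd] at hl; simp only at hl
          have := hIHv.1 y l' ξs u (by rw [hthv]; exact hl)
          exact ⟨this.1, by omega, this.2.2⟩
        · intro z n' θs u hl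
          rw [hd] at hl; simp only at hl
          rw [xi_look_updates] at hl
          cases hlk : (cUpd n l.stripLams.1 _ v).lookup z with
          | some vv =>
            rw [hlk] at hl; simp only [Option.some.injEq] at hl
            obtain ⟨he1, he2⟩ := cUpd_lookup hlk
            have hθ : θs = vv.2.1 := by
              have := congrArg (fun t => t.2.1) hl; simpa using this.symm
            have hu : u = vv.2.2 := by
              have := congrArg (fun t => t.2.2) hl; simpa using this.symm
            have huv : u = v := hu.trans he2
            exact ⟨by omega, by omega, by rw [hθ, he1, huv, hs], ⟨l, r, by rw [huv, hs]⟩⟩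
          | none =>
            rw [hlk] at hl; simp only at hl
            have := hIHv.2 z n' θs u (by rw [hxiv]; exact hl)
            exact ⟨this.1, by omega, this.2.2⟩
      | C2 n y' B r c A ss d' sd hvar hA hha hss =>
        constructor
        · intro y l ξs u hl
          rw [hd] at hl; simp only at hl
          have := hIHv.1 y l ξs u (by rw [hthv]; exact hl)
          exact ⟨this.1, by omega, this.2.2⟩
        · intro z n' θs u hl
          rw [hd] at hl; simp only at hl
          have := hIHv.2 z n' θs u (by rw [hxiv]; exact hl)
          exact ⟨this.1, by omega, this.2.2⟩
      | C2f n y' B r c A hvar hA hha =>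
        constructor
        · intro y l ξs u hl
          rw [hd] at hl; simp only at hl
          have := hIHv.1 y l ξs u (by rw [hthv]; exact hl)
          exact ⟨this.1, by omega, this.2.2⟩
        · intro z n' θs u hl
          rw [hd] at hl; simp only at hl
          have := hIHv.2 z n' θs u (by rw [hxiv]; exact hl)
          exact ⟨this.1, by omega, this.2.2⟩
      | C3 n y' B l r f A ws ss d' wd sd hvar hha hws hhr hwd hsd =>
        constructor
        · intro y l' ξs u hl
          rw [hd] at hl; simp only at hl
          have := hIHv.1 y l' ξs u (by rw [hthv]; exact hl)
          exact ⟨this.1, by omega, this.2.2⟩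
        · intro z n' θs u hl
          rw [hd] at hl; simp only at hl
          rw [xi_look_updates] at hl
          cases hlk : (cUpd n l.stripLams.1 _ v).lookup z with
          | some vv =>
            rw [hlk] at hl; simp only [Option.some.injEq] at hl
            obtain ⟨he1, he2⟩ := cUpd_lookup hlk
            have hθ : θs = vv.2.1 := by
              have := congrArg (fun t => t.2.1) hl; simpa using this.symm
            have hu : u = vv.2.2 := by
              have := congrArg (fun t => t.2.2) hl; simpa using this.symm
            have huv : u = v := hu.trans he2
            exact ⟨by omega, by omega, by rw [hθ, he1, huv, hs], ⟨l, r, by rw [huv, hs]⟩⟩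
          | none =>
            rw [hlk] at hl; simp only at hl
            have := hIHv.2 z n' θs u (by rw [hxiv]; exact hl)
            exact ⟨this.1, by omega, this.2.2⟩
      | C3f n y' B l r f A ws hvar hha hws hhr =>
        constructor
        · intro y l' ξs u hl
          rw [hd] at hl; simp only at hl
          have := hIHv.1 y l' ξs u (by rw [hthv]; exact hl)
          exact ⟨this.1, by omega, this.2.2⟩
        · intro z n' θs u hl
          rw [hd] at hl; simp only at hl
          rw [xi_look_updates] at hl
          cases hlk : (cUpd n l.stripLams.1 _ v).lookup z with
          | some vv =>
            rw [hlk] at hl; simp only [Option.some.injEq] at hl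
            obtain ⟨he1, he2⟩ := cUpd_lookup hlk
            have hθ : θs = vv.2.1 := by
              have := congrArg (fun t => t.2.1) hl; simpa using this.symm
            have hu : u = vv.2.2 := by
              have := congrArg (fun t => t.2.2) hl; simpa using this.symm
            have huv : u = v := hu.trans he2
            exact ⟨by omega, by omega, by rw [hθ, he1, huv, hs], ⟨l, r, by rw [huv, hs]⟩⟩
          | none =>
            rw [hlk] at hl; simp only at hl
            have := hIHv.2 z n' θs u (by rw [hxiv]; exact hl)
            exact ⟨this.1, by omega, this.2.2⟩
      | C4 n y' B l r θ θ₀ ξ x C ws n' i' hvar hha hlook =>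
        constructor
        · -- θ at v+1 is θ₀
          intro y l' ξs u hl
          rw [hd] at hl; simp only at hl
          rw [xi_look_updates] at hlook
          cases hlk : (cUpd n l.stripLams.1 θ v).lookup x with
          | some vv =>
            rw [hlk] at hlook; simp only [Option.some.injEq] at hlook
            obtain ⟨he1, he2⟩ := cUpd_lookup hlk
            have hθ0 : θ₀ = θ := by
              have h2 : θ₀ = vv.2.1 := by
                have := congrArg (fun t => t.2.1) hlook; simpa using this.symm
              rw [h2, he1]
            rw [hθ0] at hl
            have := hIHv.1 y l' ξs u (by rw [hthv]; exact hl)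
            exact ⟨this.1, by omega, this.2.2⟩
          | none =>
            rw [hlk] at hlook; simp only at hlook
            have hold := hIHv.2 x n' θ₀ i' (by rw [hxiv]; exact hlook)
            obtain ⟨hi1, hiv, hth0, _⟩ := hold
            have := (IH i' (by omega) hi1 (by omega)).1 y l' ξs u (by rw [← hth0]; exact hl)
            exact ⟨this.1, by omega, this.2.2⟩
        · intro z n'' θs u hl
          rw [hd] at hl; simp only at hl
          rw [xi_look_updates] at hl
          cases hlk : (cUpd n l.stripLams.1 θ v).lookup z with
          | some vv =>
            rw [hlk] at hl; simp only [Option.some.injEq] at hl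
            obtain ⟨he1, he2⟩ := cUpd_lookup hlk
            have hθ : θs = vv.2.1 := by
              have := congrArg (fun t => t.2.1) hl; simpa using this.symm
            have hu : u = vv.2.2 := by
              have := congrArg (fun t => t.2.2) hl; simpa using this.symm
            have huv : u = v := hu.trans he2
            exact ⟨by omega, by omega, by rw [hθ, he1, huv, hs], ⟨l, r, by rw [huv, hs]⟩⟩
          | none =>
            rw [hlk] at hl; simp only at hl
            have := hIHv.2 z n'' θs u (by rw [hxiv]; exact hl)
            exact ⟨this.1, by omega, this.2.2⟩

end TablesOK
section CutsFacts

open Play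

variable {T : TTree} {P : DIProblem} {π : Play T P}

theorem cuts_head {p : List ℕ} {τ : Tile} {cs : List (ℕ × ℕ)} {q : List ℕ}
    (D : π.TilePlayCuts p τ cs q) :
    ∀ c, cs.head? = some c → (π.pos c.1).node = p ∧ π.child c.2 c.1 ∧
      ∃ d, (π.pos c.2).node = p ++ [d] := by
  cases D with
  | simple p subs d i j hsub hni hnj hch =>
    intro c hc
    simp only [List.head?_cons, Option.some.injEq] at hc
    subst hc
    exact ⟨hni, hch, d, hnj⟩
  | step p subs d i j j₂ cutsR qq τ' hsub hni hnj hch D' =>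
    intro c hc
    simp only [List.head?_cons, Option.some.injEq] at hc
    subst hc
    exact ⟨hni, hch, d, hnj⟩

theorem cuts_mem {p : List ℕ} {τ : Tile} {cs : List (ℕ × ℕ)} {q : List ℕ}
    (D : π.TilePlayCuts p τ cs q) :
    TileValid T p τ → ∀ c ∈ cs, π.child c.2 c.1 ∧
      (∃ t', T.at? (π.pos c.1).node = some t' ∧ t'.label.isHeadLabel) ∧
      (∃ d, (π.pos c.2).node = (π.pos c.1).node ++ [d]) := by
  induction D with
  | simple p subs d i j hsub hni hnj hch =>
    intro hval c hcmem
    simp only [List.mem_singleton] at hcmem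
    subst hcmem
    refine ⟨hch, ?_, ⟨d, by rw [hni, hnj]⟩⟩
    cases hval with
    | mk _ _ t' hat hlab hlen hrec => exact ⟨t', by rw [hni]; exact hat, hlab⟩
  | step p subs d i j j₂ cutsR qq τ' hsub hni hnj hch D' IH =>
    intro hval c hcmem
    have hval' : TileValid T (p ++ [d, 0]) τ' := by
      cases hval with
      | mk _ _ t' hat hlab hlen hrec => exact hrec d τ' hsub
    rcases List.mem_cons.1 hcmem with h | h
    · subst h
      refine ⟨hch, ?_, ⟨d, by rw [hni, hnj]⟩⟩
      cases hval with
      | mk _ _ t' hat hlab hlen hrec => exact ⟨t', by rw [hni]; exact hat, hlab⟩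
    · exact IH hval' c h

theorem cuts_extend {p : List ℕ} {τ : Tile} {cs : List (ℕ × ℕ)} {q : List ℕ}
    (D : π.TilePlayCuts p τ cs q) :
    (∀ c ∈ cs, ∃ d s, (π.pos c.2).node = p ++ d :: s) ∧ (∃ d s, q = p ++ d :: s) := by
  induction D with
  | simple p subs d i j hsub hni hnj hch =>
    constructor
    · intro c hc; simp only [List.mem_singleton] at hc; subst hc; exact ⟨d, [], hnj⟩
    · exact ⟨d, [], rfl⟩
  | step p subs d i j j₂ cutsR qq τ' hsub hni hnj hch D' IH =>
    constructor
    · intro c hc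
      rcases List.mem_cons.1 hc with h | h
      · subst h; exact ⟨d, [], hnj⟩
      · obtain ⟨d', s', hds⟩ := IH.1 c h
        exact ⟨d, 0 :: d' :: s', by rw [hds]; simp⟩
    · obtain ⟨d', s', hds⟩ := IH.2
      exact ⟨d, 0 :: d' :: s', by rw [hds]; simp⟩

theorem cuts_last_node {p : List ℕ} {τ : Tile} {cs : List (ℕ × ℕ)} {q : List ℕ}
    (D : π.TilePlayCuts p τ cs q) :
    ∀ c, cs.getLast? = some c → (π.pos c.2).node = q := by
  induction D with
  | simple p subs d i j hsub hni hnj hch =>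
    intro c hc
    simp only [List.getLast?_singleton, Option.some.injEq] at hc
    subst hc
    exact hnj
  | step p subs d i j j₂ cutsR qq τ' hsub hni hnj hch D' IH =>
    intro c hc
    rw [List.getLast?_cons_cons] at hc
    exact IH c hc

theorem cuts_order {p : List ℕ} {τ : Tile} {cs : List (ℕ × ℕ)} {q : List ℕ}
    (D : π.TilePlayCuts p τ cs q) :
    ∀ c₀, cs.head? = some c₀ →
      (∀ c ∈ cs, c₀.1 ≤ c.1 ∧ (c = c₀ ∨ ∃ c' ∈ cs, c.1 = c'.2 + 1)) ∧
      (∀ cl, cs.getLast? = some cl →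
        (∀ c ∈ cs, c.2 ≤ cl.2) ∧
        (∀ w, c₀.1 ≤ w → w ≤ cl.2 → ∃ c ∈ cs, c.1 ≤ w ∧ w ≤ c.2)) := by
  induction D with
  | simple p subs d i j hsub hni hnj hch =>
    intro c₀ h₀
    simp only [List.head?_cons, Option.some.injEq] at h₀
    subst h₀
    constructor
    · intro c hc; simp only [List.mem_singleton] at hc; subst hc
      exact ⟨le_refl _, Or.inl rfl⟩
    · intro cl hcl
      simp only [List.getLast?_singleton, Option.some.injEq] at hcl
      subst hcl
      constructor
      · intro c hc; simp only [List.mem_singleton] at hc; subst hc; exact le_refl _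
      · intro w hw1 hw2; exact ⟨(i, j), List.mem_singleton_self _, hw1, hw2⟩
  | step p subs d i j j₂ cutsR qq τ' hsub hni hnj hch D' IH =>
    intro c₀ h₀
    simp only [List.head?_cons, Option.some.injEq] at h₀
    subst h₀
    have hij : i < j := hch.1
    obtain ⟨hstarts', hrest'⟩ := IH (j+1, j₂) rfl
    have hhd' := cuts_head D' (j+1, j₂) rfl
    have hj2 : j + 1 < j₂ := hhd'.2.1.1
    constructor
    · intro c hc
      rcases List.mem_cons.1 hc with h | h
      · subst h; exact ⟨le_refl _, Or.inl rfl⟩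
      · obtain ⟨hle, hor⟩ := hstarts' c h
        refine ⟨by simp only []; omega, Or.inr ?_⟩
        rcases hor with h1 | ⟨c', hc', he⟩
        · exact ⟨(i, j), List.mem_cons_self, by rw [h1]⟩
        · exact ⟨c', List.mem_cons_of_mem _ hc', he⟩
    · intro cl hcl
      rw [List.getLast?_cons_cons] at hcl
      obtain ⟨hends', hcov'⟩ := hrest' cl hcl
      have hj2cl : j₂ ≤ cl.2 := hends' (j+1, j₂) (List.mem_cons_self)
      constructor
      · intro c hc
        rcases List.mem_cons.1 hc with h | h
        · subst h; show j ≤ cl.2; omega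
        · exact hends' c h
      · intro w hw1 hw2
        by_cases hwj : w ≤ j
        · exact ⟨(i, j), List.mem_cons_self, hw1, hwj⟩
        · obtain ⟨c, hcmem, hc1, hc2⟩ := hcov' w (by show j + 1 ≤ w; omega) hw2
          exact ⟨c, List.mem_cons_of_mem _ hcmem, hc1, hc2⟩

theorem cuts_unique_leaf {p : List ℕ} {τ : Tile} {cs1 : List (ℕ × ℕ)} {q1 : List ℕ}
    (D1 : π.TilePlayCuts p τ cs1 q1) :
    ∀ cs2 q2, π.TilePlayCuts p τ cs2 q2 →
      ∀ c ∈ cs2, (π.pos c.2).node = q1 →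
        ∀ cl, cs2.getLast? = some cl → c.2 = cl.2 := by
  induction D1 with
  | simple p subs d i j hsub hni hnj hch =>
    intro cs2 q2 D2 c hc hnode cl hcl
    cases D2 with
    | simple pp2 ss2 d2 i2 j2 hsub2 hni2 hnj2 hch2 =>
      simp only [List.mem_singleton] at hc
      simp only [List.getLast?_singleton, Option.some.injEq] at hcl
      subst hc; subst hcl; rfl
    | step pp2 ss2 d2 i2 j2 j2' cutsR2 qq2 τ2' hsub2 hni2 hnj2 hch2 D2' =>
      rcases List.mem_cons.1 hc with h | h
      · subst h
        rw [hnj2] at hnode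
        have hd2d : d2 = d := by
          have h2 := List.append_cancel_left hnode
          simpa using h2
        subst hd2d
        rw [hsub] at hsub2
        simp at hsub2
      · obtain ⟨dd, ss, hds⟩ := (cuts_extend D2').1 c h
        rw [hds] at hnode
        have h2 : p ++ (d2 :: 0 :: dd :: ss) = p ++ [d] := by
          simpa [List.append_assoc] using hnode
        have h3 := List.append_cancel_left h2
        simp at h3
  | step p subs d i j j₂ cutsR qq τ' hsub hni hnj hch D1' IH =>
    intro cs2 q2 D2 c hc hnode cl hcl
    obtain ⟨dd1, ss1, hq1⟩ := (cuts_extend D1').2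
    cases D2 with
    | simple pp2 ss2 d2 i2 j2 hsub2 hni2 hnj2 hch2 =>
      simp only [List.mem_singleton] at hc
      simp only [List.getLast?_singleton, Option.some.injEq] at hcl
      subst hc; subst hcl; rfl
    | step pp2 ss2 d2 i2 j2 j2' cutsR2 qq2 τ2' hsub2 hni2 hnj2 hch2 D2' =>
      rcases List.mem_cons.1 hc with h | h
      · subst h
        rw [hnj2, hq1] at hnode
        have h2 : p ++ [d2] = p ++ (d :: 0 :: dd1 :: ss1) := by
          simpa [List.append_assoc] using hnode
        have h3 := List.append_cancel_left h2
        simp at h3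
      · by_cases hdd : d2 = d
        · subst hdd
          rw [hsub] at hsub2
          have hττ : τ2' = τ' := by
            simpa using hsub2.symm
          subst hττ
          rw [List.getLast?_cons_cons] at hcl
          exact IH _ _ D2' c h hnode cl hcl
        · obtain ⟨dd2, ss2, hds2⟩ := (cuts_extend D2').1 c h
          rw [hds2, hq1] at hnode
          have h2 : p ++ (d2 :: 0 :: dd2 :: ss2) = p ++ (d :: 0 :: dd1 :: ss1) := by
            simpa [List.append_assoc] using hnode
          have h3 := List.append_cancel_left h2
          simp at h3
          exact absurd h3.1 hdd

end CutsFacts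
section MoveFacts

open Play

variable {T : TTree} {P : DIProblem}

/-- From a position with an `arg` state, the move is an A-move: the θ-table is
updated by `aUpd` at the current index, and the next state is not an `arg` state. -/
theorem arg_succ (π : Play T P) {v : ℕ} (hv1 : 1 ≤ v) (hvlen : v < π.len)
    {ls : List Tm} {r : Tm} (hst : (π.pos v).st = GState.arg ls r) :
    ∃ xs, T.labelAt? (π.pos v).node = some (.lam xs) ∧
      (π.pos (v+1)).th = (π.pos v).th.updates (aUpd xs ls (π.pos v).xi v) ∧
      (∀ ls' r', (π.pos (v+1)).st ≠ GState.arg ls' r') := by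
  have hmv := π.steps v hv1 hvlen
  generalize hs : π.pos v = s at hmv
  generalize hk : π.mv (v+1) = k at hmv
  generalize hd : π.pos (v+1) = dpos at hmv
  rw [hs] at hst
  cases hmv with
  | A1 n xs ls' r' θ ξ a hlam hlen hconst =>
    simp at hst
    obtain ⟨h1, h2⟩ := hst
    subst h1; subst h2
    refine ⟨xs, hlam, rfl, ?_⟩
    intro ls2 r2 hcon
    simp at hcon
    split at hcon <;> simp at hcon
  | A2 n xs ls' r' θ ξ f A ss hlam hlen hconst hA hha =>
    simp at hst
    obtain ⟨h1, h2⟩ := hst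
    subst h1; subst h2
    refine ⟨xs, hlam, rfl, ?_⟩
    intro ls2 r2 hcon
    simp at hcon
  | A2f n xs ls' r' θ ξ f A hlam hlen hconst hA hha =>
    simp at hst
    obtain ⟨h1, h2⟩ := hst
    subst h1; subst h2
    refine ⟨xs, hlam, rfl, ?_⟩
    intro ls2 r2 hcon
    simp at hcon
  | A3 n xs ls' r' θ ξ ξ₀ y B l i' hlam hlen hvar hlook =>
    simp at hst
    obtain ⟨h1, h2⟩ := hst
    subst h1; subst h2
    refine ⟨xs, hlam, rfl, ?_⟩
    intro ls2 r2 hcon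
    simp at hcon
  | B1 n f A r' ss d sd hconst hha hss => simp at hst
  | C1 n y B l r' a hvar hstrip => simp at hst
  | C2 n y B r' c A ss d sd hvar hA hha hss => simp at hst
  | C2f n y B r' c A hvar hA hha => simp at hst
  | C3 n y B l r' f A ws ss d wd sd hvar hha hws hhr hwd hsd => simp at hst
  | C3f n y B l r' f A ws hvar hha hws hhr => simp at hst
  | C4 n y B l r' θ θ₀ ξ x C ws n' i' hvar hha hlook => simp at hst

/-- Facts about the end position of a play on a simple tile whose parent
position is at a head-labelled node. -/
theorem cut_end_facts (π : Play T P)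
    (htok : ∀ w, 1 ≤ w → w ≤ π.len → thOK π w ∧ xiOK π w)
    {a b : ℕ} (hch : π.child b a)
    (hlab : ∃ t', T.at? (π.pos a).node = some t' ∧ t'.label.isHeadLabel)
    (hnode : ∃ d, (π.pos b).node = (π.pos a).node ++ [d]) :
    (∃ ls r, (π.pos b).st = GState.arg ls r) ∧
    (2 ≤ b → (π.pos b).th = (π.pos a).th) ∧ (a = 0 → b = 1) := by
  obtain ⟨hab, hblen, hdisj⟩ := hch
  obtain ⟨t', hat, hlabel⟩ := hlab
  obtain ⟨d0, hnd⟩ := hnode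
  have hlab2 : T.labelAt? (π.pos a).node = some t'.label := by
    unfold TTree.labelAt?
    rw [hat]
    rfl
  by_cases hb1 : b = 1
  · subst hb1
    obtain ⟨e, _, hst⟩ := π.init_st
    exact ⟨⟨e.args, e.rhs, hst⟩, by omega, fun _ => rfl⟩
  · have hb2 : 2 ≤ b := by omega
    have hmv := π.steps (b-1) (by omega) (by omega)
    have hbeq : b - 1 + 1 = b := by omega
    rw [hbeq] at hmv
    rcases hdisj with ⟨hk, hab'⟩ | ⟨hk, y, B, l, ξ', hlab', hlook⟩ |
      ⟨hk, l, r, x, C, hstprev, hhead, hlook⟩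
    · -- moves A2, B1, C2, C3 from the previous position
      subst hab'
      rcases hk with h | h | h | h <;> rw [h] at hmv <;>
        generalize hs : π.pos (b-1) = s at hmv <;>
        generalize hd : π.pos b = dpos at hmv
      · -- A2 kind
        exfalso
        cases hmv with
        | A2 n xs ls r θ ξ f A ss hlam hlen hconst hA hha =>
          rw [hs] at hlab2
          have hlab3 : T.labelAt? n = some t'.label := hlab2
          rw [hlam] at hlab3
          simp only [Option.some.injEq] at hlab3
          rw [← hlab3] at hlabel
          exact hlabel
        | A2f n xs ls r θ ξ f A hlam hlen hconst hA hha =>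
          rw [hs] at hlab2
          have hlab3 : T.labelAt? n = some t'.label := hlab2
          rw [hlam] at hlab3
          simp only [Option.some.injEq] at hlab3
          rw [← hlab3] at hlabel
          exact hlabel
      · -- B1 kind
        cases hmv with
        | B1 n f A r ss d sd hconst hha hss =>
          exact ⟨⟨_, _, rfl⟩, fun _ => rfl, fun h0 => by omega⟩
      · -- C2 kind
        cases hmv with
        | C2 n y B r c A ss d sd hvar hA hha hss =>
          exact ⟨⟨_, _, rfl⟩, fun _ => rfl, fun h0 => by omega⟩
        | C2f n y B r c A hvar hA hha =>
          exfalso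
          have hfin : (π.pos b).st.IsFinal := by rw [hd]; trivial
          exact nonfinal π (by omega) hblen hfin
      · -- C3 kind
        exfalso
        cases hmv with
        | C3 n y B l r f A ws ss d wd sd hvar hha hws hhr hwd hsd =>
          rw [hd, hs] at hnd
          simp at hnd
        | C3f n y B l r f A ws hvar hha hws hhr =>
          have hfin : (π.pos b).st.IsFinal := by rw [hd]; trivial
          exact nonfinal π (by omega) hblen hfin
    · -- A3-clause children cannot have a head-labelled parent node
      exfalso
      have h1 := (htok b (by omega) (le_of_lt hblen)).1 y l ξ' a hlook
      obtain ⟨_, _, _, ⟨xs, hlam⟩, _⟩ := h1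
      rw [hlab2] at hlam
      simp only [Option.some.injEq] at hlam
      rw [hlam] at hlabel
      exact hlabel
    · -- C4-clause
      have h1 := (htok b (by omega) (le_of_lt hblen)).2 x (π.pos b).node (π.pos b).th a hlook
      obtain ⟨ha1, hab2, hth, hstv⟩ := h1
      refine ⟨?_, fun _ => hth, fun h0 => by omega⟩
      rw [hk] at hmv
      generalize hs : π.pos (b-1) = s at hmv
      generalize hd : π.pos b = dpos at hmv
      cases hmv with
      | C4 n y B l' r' θ θ₀ ξ xx C ws n' i' hvar hha hlookx =>
        exact ⟨_, _, rfl⟩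

end MoveFacts
section Thread

open Play

variable {T : TTree} {P : DIProblem}

theorem mem_of_head?' {α : Type _} {l : List α} {a : α} (h : l.head? = some a) : a ∈ l := by
  cases l with
  | nil => simp at h
  | cons hd tl =>
    simp only [List.head?_cons, Option.some.injEq] at h
    subst h
    exact List.mem_cons_self

theorem cuts_thread (π : Play T P)
    (htok : ∀ w, 1 ≤ w → w ≤ π.len → thOK π w ∧ xiOK π w)
    {p : List ℕ} {τ : Tile} {cs : List (ℕ × ℕ)} {q : List ℕ}
    (D : π.TilePlayCuts p τ cs q) :
    TileValid T p τ →
    ∀ c₀ cl, cs.head? = some c₀ → cs.getLast? = some cl →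
      ∀ y e, (π.pos cl.2).th.look y = some e →
        (π.pos c₀.2).th.look y = some e ∨ ∃ c ∈ cs, e.2.2 = c.2 := by
  induction D with
  | simple p subs d i j hsub hni hnj hch =>
    intro hval c₀ cl h₀ hl y e he
    simp only [List.head?_cons, Option.some.injEq] at h₀
    simp only [List.getLast?_singleton, Option.some.injEq] at hl
    subst h₀; subst hl
    exact Or.inl he
  | step p subs d i j j₂ cutsR qq τ' hsub hni hnj hch D' IH =>
    intro hval c₀ cl h₀ hl y e he
    simp only [List.head?_cons, Option.some.injEq] at h₀
    subst h₀
    rw [List.getLast?_cons_cons] at hl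
    have hval' : TileValid T (p ++ [d, 0]) τ' := by
      cases hval with
      | mk _ _ t' hat hlabv hlen hrec => exact hrec d τ' hsub
    have hIH := IH hval' (j+1, j₂) cl rfl hl y e he
    rcases hIH with hmid | ⟨c, hcm, hce⟩
    · -- the entry is present in th j₂ ; push it back to th j
      have hhd' := cuts_head D' (j+1, j₂) rfl
      have hlabel' : ∃ t', T.at? (π.pos (j+1, j₂).1).node = some t' ∧ t'.label.isHeadLabel := by
        cases hval' with
        | mk _ _ t' hat hlabv hlen hrec =>
          exact ⟨t', by rw [hhd'.1]; exact hat, hlabv⟩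
      have hef := cut_end_facts π htok hhd'.2.1 hlabel' (by
          obtain ⟨d', hd'⟩ := hhd'.2.2
          exact ⟨d', by rw [hhd'.1]; exact hd'⟩)
      have hij : i < j := hch.1
      have hj1 : 1 ≤ j := by omega
      have hj2ge : 2 ≤ j₂ := by
        have h2 := hhd'.2.1.1
        simp only at h2
        omega
      have hthj2 : (π.pos (j+1, j₂).2).th = (π.pos (j+1, j₂).1).th := hef.2.1 hj2ge
      -- the move out of j is an A-move
      have hlabelj : ∃ t', T.at? (π.pos i).node = some t' ∧ t'.label.isHeadLabel := by
        cases hval with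
        | mk _ _ t' hat hlabv hlen hrec => exact ⟨t', by rw [hni]; exact hat, hlabv⟩
      have hefj := cut_end_facts π htok hch hlabelj ⟨d, by rw [hni, hnj]⟩
      obtain ⟨⟨lsj, rj, hstj⟩, _, _⟩ := hefj
      have hjlen : j < π.len := hch.2.1
      obtain ⟨xsj, _, hthsucc, _⟩ := arg_succ π hj1 hjlen hstj
      simp only at hmid hthj2
      rw [hthj2] at hmid
      rw [hthsucc] at hmid
      rw [theta_look_updates] at hmid
      cases hlk : (aUpd xsj lsj (π.pos j).xi j).lookup y with
      | some vv =>
        rw [hlk] at hmid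
        simp only at hmid
        obtain ⟨_, he2⟩ := aUpd_lookup hlk
        right
        refine ⟨(i, j), List.mem_cons_self, ?_⟩
        have : e.2.2 = vv.2.2 := by
          have := congrArg (fun t : Option (Tm × Xi × ℕ) => (t.map fun v => v.2.2)) hmid
          simpa using this.symm
        rw [this, he2]
      | none =>
        rw [hlk] at hmid
        exact Or.inl hmid
    · exact Or.inr ⟨c, List.mem_cons_of_mem _ hcm, hce⟩

end Thread
theorem basic_tile_plays_child {T : TTree} {P : DIProblem} (π : Play T P)
    (p : List ℕ) (τ : Tile) (hb : BasicTile T p τ)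
    (i m n : ℕ) (q : List ℕ) (cuts : List (ℕ × ℕ))
    (hc : π.TilePlayCuts p τ cuts q)
    (hfirst : ∃ x, cuts.head? = some x ∧ x.1 = i)
    (hlast : ∃ y, cuts.getLast? = some y ∧ y.2 = m)
    (him : i < m) (hmn : m < n)
    (hn : ∃ q', π.TilePlayOn p τ i n q') :
    ∃ m' c, m < m' ∧ m' < n ∧ c ∈ cuts ∧ π.child m' c.2 := by
  classical
  obtain ⟨hval, -⟩ := hb
  have htok := tablesOK π
  obtain ⟨x0, hx0, hx0i⟩ := hfirst
  obtain ⟨y0, hy0, hy0m⟩ := hlast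
  obtain ⟨q2, cuts2, x2, y2, hc2, hx2, hx2i, hy2, hy2n⟩ := hn
  have y0mem : y0 ∈ cuts := mem_of_getLast?' hy0
  have y2mem : y2 ∈ cuts2 := mem_of_getLast?' hy2
  have x0mem : x0 ∈ cuts := mem_of_head?' hx0
  have hmemS := cuts_mem hc hval
  have hmemL := cuts_mem hc2 hval
  have hnlen : n < π.len := by
    have h1 := (hmemL y2 y2mem).1.2.1
    omega
  have hm1 : 1 ≤ m := by omega
  -- the state at m is an arg state
  have hefS := cut_end_facts π htok (hmemS y0 y0mem).1 (hmemS y0 y0mem).2.1 (hmemS y0 y0mem).2.2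
  obtain ⟨⟨ls0, r0, hstm0⟩, -, -⟩ := hefS
  have hstm : (π.pos m).st = GState.arg ls0 r0 := by rw [← hy0m]; exact hstm0
  -- every short cut end is ≤ m
  obtain ⟨hstartsS, hrestS⟩ := cuts_order hc x0 hx0
  obtain ⟨hendsS, -⟩ := hrestS y0 hy0
  have hendm : ∀ c ∈ cuts, c.2 ≤ m := by
    intro c hcmem
    have := hendsS c hcmem
    omega
  -- entries of th m are ancient or short-cut ends
  have hHm : ∀ y l ξs u, (π.pos m).th.look y = some (l, ξs, u) →
      (1 ≤ i ∧ u < i) ∨ ∃ c ∈ cuts, u = c.2 := by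
    intro y l ξs u hlk
    have hth := cuts_thread π htok hc hval x0 y0 hx0 hy0 y (l, ξs, u)
      (by rw [hy0m]; exact hlk)
    rcases hth with h | ⟨c, hcm, hce⟩
    · have hef0 := cut_end_facts π htok (hmemS x0 x0mem).1 (hmemS x0 x0mem).2.1
        (hmemS x0 x0mem).2.2
      by_cases hi0 : i = 0
      · have hb01 : x0.2 = 1 := hef0.2.2 (by omega)
        rw [hb01, π.init_th] at h
        simp [theta_look_empty] at h
      · have hi1 : 1 ≤ i := by omega
        have hlt : x0.1 < x0.2 := (hmemS x0 x0mem).1.1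
        have hx02 : 2 ≤ x0.2 := by omega
        have hth0 : (π.pos x0.2).th = (π.pos x0.1).th := hef0.2.1 hx02
        rw [hth0] at h
        have h2 : (π.pos i).th.look y = some (l, ξs, u) := by rw [← hx0i]; exact h
        have h3 := (htok i hi1 (by omega)).1 y l ξs u h2
        exact Or.inl ⟨hi1, h3.2.1⟩
    · exact Or.inr ⟨c, hcm, hce⟩
  -- locate the long cut containing m
  obtain ⟨hstartsL, hrestL⟩ := cuts_order hc2 x2 hx2
  obtain ⟨hendsL, hcovL⟩ := hrestL y2 hy2
  obtain ⟨cab, hcabmem, hcab1, hcab2⟩ := hcovL m (by omega) (by omega)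
  have hchba := (hmemL cab hcabmem).1
  have hablt : cab.1 < cab.2 := hchba.1
  have hblen : cab.2 < π.len := hchba.2.1
  have hbn : cab.2 ≤ n := by
    have := hendsL cab hcabmem
    omega
  have hia : i ≤ cab.1 := by
    have := (hstartsL cab hcabmem).1
    omega
  -- the long cut does not start at m
  have ham : cab.1 ≠ m := by
    intro he
    rcases (hstartsL cab hcabmem).2 with h | ⟨c', hc'm, hce⟩
    · rw [h] at he
      omega
    · have hchc' := (hmemL c' hc'm).1
      have hefc' := cut_end_facts π htok hchc' (hmemL c' hc'm).2.1 (hmemL c' hc'm).2.2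
      obtain ⟨⟨lsc, rc, hstc⟩, -, -⟩ := hefc'
      have hc'1 : 1 ≤ c'.2 := by
        have := hchc'.1
        omega
      obtain ⟨-, -, -, hnotarg⟩ := arg_succ π hc'1 hchc'.2.1 hstc
      exact hnotarg ls0 r0 (by rw [show c'.2 + 1 = m by omega]; exact hstm)
  have hma : cab.1 < m := by omega
  -- the long cut does not end at m
  have hqnode : (π.pos m).node = q := by
    have h := cuts_last_node hc y0 hy0
    rw [hy0m] at h
    exact h
  have hbm : cab.2 ≠ m := by
    intro he
    have hb_eq := cuts_unique_leaf hc cuts2 q2 hc2 cab hcabmem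
      (by rw [he]; exact hqnode) y2 hy2
    omega
  have hmb : m < cab.2 := by omega
  -- the child relation for the long cut must be via the C4 clause
  obtain ⟨-, -, hdisjba⟩ := hchba
  rcases hdisjba with ⟨hk, habeq⟩ | ⟨hk, yv, Bv, lv, ξv, hlabv, hlookv⟩ |
    ⟨hkC4, lC, rC, xC, CC, hstprev, hheadC, hlookb⟩
  · exfalso
    omega
  · exfalso
    have h1 := (htok cab.2 (by omega) (by omega)).1 yv lv ξv cab.1 hlookv
    obtain ⟨-, -, -, ⟨xs, hlam⟩, -⟩ := h1
    obtain ⟨t', hat, hlabel⟩ := (hmemL cab hcabmem).2.1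
    have hlab2 : T.labelAt? (π.pos cab.1).node = some t'.label := by
      unfold TTree.labelAt?
      rw [hat]
      rfl
    rw [hlab2] at hlam
    simp only [Option.some.injEq] at hlam
    rw [hlam] at hlabel
    exact hlabel
  -- C4 clause: st (cab.2 - 1) = val, table lookup with index cab.1
  have hb2m : m + 2 ≤ cab.2 := by
    by_contra hcon
    have hbm1 : cab.2 - 1 = m := by omega
    rw [hbm1, hstm] at hstprev
    simp at hstprev
  -- the invariant between m+1 and cab.2 - 1
  have hinv : ∀ w, m + 1 ≤ w → w ≤ cab.2 - 1 →
      (∃ m' c, m < m' ∧ m' < n ∧ c ∈ cuts ∧ π.child m' c.2) ∨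
      ((∀ y l ξs u, (π.pos w).th.look y = some (l, ξs, u) →
          u < i ∨ (∃ c ∈ cuts, u = c.2) ∨ m < u) ∧
       (∀ z nz θs u, (π.pos w).xi.look z = some (nz, θs, u) → u < i ∨ m < u)) := by
    intro w
    induction w using Nat.strong_induction_on with
    | _ w IHw =>
      intro hw1 hw2
      have hwn : w < n := by omega
      have hwlen : w < π.len := by omega
      have hv1 : 1 ≤ w - 1 := by omega
      have hvlen : w - 1 < π.len := by omega
      have hweq : w - 1 + 1 = w := by omega
      by_cases hbase : w = m + 1
      · -- base case: the move out of m
        have hmv := π.steps (w-1) hv1 hvlen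
        rw [hweq] at hmv
        have hvm : w - 1 = m := by omega
        rw [hvm] at hmv
        generalize hs : π.pos m = s at hmv
        generalize hkk : π.mv w = k at hmv
        generalize hd : π.pos w = dpos at hmv
        cases hmv with
        | A1 nn xs ls rr θ ξ aa hlam hlen hconst =>
          exfalso
          have hfin : (π.pos w).st.IsFinal := by rw [hd]; exact isFinal_ite _
          exact nonfinal π (by omega) hwlen hfin
        | A2 nn xs ls rr θ ξ f A ss hlam hlen hconst hA hha =>
          left
          exact ⟨w, y0, by omega, hwn, y0mem,
            by omega, hwlen, Or.inl ⟨Or.inl hkk, by omega⟩⟩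
        | A2f nn xs ls rr θ ξ f A hlam hlen hconst hA hha =>
          exfalso
          have hfin : (π.pos w).st.IsFinal := by rw [hd]; trivial
          exact nonfinal π (by omega) hwlen hfin
        | A3 nn xs ls rr θ ξ ξ₀ yy BB ll uu hlam hlen hvar hlook =>
          have hlook2 := hlook
          rw [theta_look_updates] at hlook2
          cases hlk : (aUpd xs ls ξ m).lookup yy with
          | some vv =>
            rw [hlk] at hlook2
            simp only [Option.some.injEq] at hlook2
            obtain ⟨-, hv2⟩ := aUpd_lookup hlk
            have huu : vv.2.2 = uu := by
              have h5 := congrArg (fun t : Tm × Xi × ℕ => t.2.2) hlook2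
              simpa using h5
            left
            refine ⟨w, y0, by omega, hwn, y0mem,
              by omega, hwlen, Or.inr (Or.inl ⟨hkk, yy, BB, ll, ξ₀, ?_, ?_⟩)⟩
            · rw [hd]; exact hvar
            · rw [hd, show y0.2 = uu by omega]
              exact hlook
          | none =>
            rw [hlk] at hlook2
            have hHu := hHm yy ll ξ₀ uu (by rw [hs]; exact hlook2)
            have htokm := (htok m hm1 (by omega)).1 yy ll ξ₀ uu (by rw [hs]; exact hlook2)
            obtain ⟨hu1, hum, hξ0, -, -⟩ := htokm
            rcases hHu with ⟨hi1, hui⟩ | ⟨c, hcm, hce⟩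
            · -- ancient entry: establish the invariant at w
              right
              constructor
              · intro y l ξs u hl
                have hl2 : (θ.updates (aUpd xs ls ξ m)).look y = some (l, ξs, u) := hl
                rw [theta_look_updates] at hl2
                cases hlk2 : (aUpd xs ls ξ m).lookup y with
                | some vv2 =>
                  rw [hlk2] at hl2
                  simp only [Option.some.injEq] at hl2
                  obtain ⟨-, hv2⟩ := aUpd_lookup hlk2
                  have h3 : vv2.2.2 = u := by
                    have h5 := congrArg (fun t : Tm × Xi × ℕ => t.2.2) hl2
                    simpa using h5
                  refine Or.inr (Or.inl ⟨y0, y0mem, by omega⟩)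
                | none =>
                  rw [hlk2] at hl2
                  rcases hHm y l ξs u (by rw [hs]; exact hl2) with ⟨-, h⟩ | h
                  · exact Or.inl h
                  · exact Or.inr (Or.inl h)
              · intro z nz θs u hl
                have hl2 : ξ₀.look z = some (nz, θs, u) := hl
                rw [hξ0] at hl2
                have h4 := (htok uu hu1 (by omega)).2 z nz θs u hl2
                left
                omega
            · -- short-cut-end entry: witness
              left
              refine ⟨w, c, by omega, hwn, hcm, ?_, hwlen,
                Or.inr (Or.inl ⟨hkk, yy, BB, ll, ξ₀, ?_, ?_⟩)⟩
              · have := hendm c hcm; omega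
              · rw [hd]; exact hvar
              · rw [hd, ← hce]
                exact hlook
        | B1 nn f A rr ss dd sd hconst hha hss =>
          exfalso; rw [hs] at hstm; simp at hstm
        | C1 nn yy BB ll rr θ ξ aa hvar hstrip =>
          exfalso; rw [hs] at hstm; simp at hstm
        | C2 nn yy BB rr θ ξ cc A ss dd sd hvar hA hha hss =>
          exfalso; rw [hs] at hstm; simp at hstm
        | C2f nn yy BB rr θ ξ cc A hvar hA hha =>
          exfalso; rw [hs] at hstm; simp at hstm
        | C3 nn yy BB ll rr θ ξ f A ws ss dd wd sd hvar hha hws hhr hwd hsd =>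
          exfalso; rw [hs] at hstm; simp at hstm
        | C3f nn yy BB ll rr θ ξ f A ws hvar hha hws hhr =>
          exfalso; rw [hs] at hstm; simp at hstm
        | C4 nn yy BB ll rr θ θ₀ ξ xx CC ws nz' ii hvar hha hlook =>
          exfalso; rw [hs] at hstm; simp at hstm
      · -- inductive step: the move out of w - 1 > m
        rcases IHw (w-1) (by omega) (by omega) (by omega) with hW | ⟨hTH, hXI⟩
        · exact Or.inl hW
        have hmv := π.steps (w-1) hv1 hvlen
        rw [hweq] at hmv
        generalize hs : π.pos (w-1) = s at hmv
        generalize hkk : π.mv w = k at hmv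
        generalize hd : π.pos w = dpos at hmv
        cases hmv with
        | A1 nn xs ls rr θ ξ aa hlam hlen hconst =>
          exfalso
          have hfin : (π.pos w).st.IsFinal := by rw [hd]; exact isFinal_ite _
          exact nonfinal π (by omega) hwlen hfin
        | A2 nn xs ls rr θ ξ f A ss hlam hlen hconst hA hha =>
          right
          constructor
          · intro y l ξs u hl
            have hl2 : (θ.updates (aUpd xs ls ξ (w-1))).look y = some (l, ξs, u) := hl
            rw [theta_look_updates] at hl2
            cases hlk2 : (aUpd xs ls ξ (w-1)).lookup y with
            | some vv2 =>
              rw [hlk2] at hl2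
              simp only [Option.some.injEq] at hl2
              obtain ⟨-, hv2⟩ := aUpd_lookup hlk2
              have h3 : vv2.2.2 = u := by
                have h5 := congrArg (fun t : Tm × Xi × ℕ => t.2.2) hl2
                simpa using h5
              right; right
              omega
            | none =>
              rw [hlk2] at hl2
              exact hTH y l ξs u (by rw [hs]; exact hl2)
          · intro z nz θs u hl
            have hl2 : ξ.look z = some (nz, θs, u) := hl
            exact hXI z nz θs u (by rw [hs]; exact hl2)
        | A2f nn xs ls rr θ ξ f A hlam hlen hconst hA hha =>
          exfalso
          have hfin : (π.pos w).st.IsFinal := by rw [hd]; trivial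
          exact nonfinal π (by omega) hwlen hfin
        | A3 nn xs ls rr θ ξ ξ₀ yy BB ll uu hlam hlen hvar hlook =>
          have hth_part : ∀ y l ξs u,
              (θ.updates (aUpd xs ls ξ (w-1))).look y = some (l, ξs, u) →
              u < i ∨ (∃ c ∈ cuts, u = c.2) ∨ m < u := by
            intro y l ξs u hl2
            rw [theta_look_updates] at hl2
            cases hlk2 : (aUpd xs ls ξ (w-1)).lookup y with
            | some vv2 =>
              rw [hlk2] at hl2
              simp only [Option.some.injEq] at hl2
              obtain ⟨-, hv2⟩ := aUpd_lookup hlk2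
              have h3 : vv2.2.2 = u := by
                have h5 := congrArg (fun t : Tm × Xi × ℕ => t.2.2) hl2
                simpa using h5
              right; right
              omega
            | none =>
              rw [hlk2] at hl2
              exact hTH y l ξs u (by rw [hs]; exact hl2)
          have hlook2 := hlook
          rw [theta_look_updates] at hlook2
          cases hlk : (aUpd xs ls ξ (w-1)).lookup yy with
          | some vv =>
            rw [hlk] at hlook2
            simp only [Option.some.injEq] at hlook2
            obtain ⟨hvξ, -⟩ := aUpd_lookup hlk
            have hξ0 : ξ₀ = ξ := by
              have h2 : vv.2.1 = ξ₀ := by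
                have h5 := congrArg (fun t : Tm × Xi × ℕ => t.2.1) hlook2
                simpa using h5
              rw [← h2, hvξ]
            right
            refine ⟨fun y l ξs u hl => hth_part y l ξs u hl, ?_⟩
            intro z nz θs u hl
            have hl2 : ξ₀.look z = some (nz, θs, u) := hl
            rw [hξ0] at hl2
            exact hXI z nz θs u (by rw [hs]; exact hl2)
          | none =>
            rw [hlk] at hlook2
            have hthu := hTH yy ll ξ₀ uu (by rw [hs]; exact hlook2)
            have htokw := (htok (w-1) hv1 (by omega)).1 yy ll ξ₀ uu (by rw [hs]; exact hlook2)
            obtain ⟨hu1, huw, hξ0, -, -⟩ := htokw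
            rcases hthu with hui | ⟨c, hcm, hce⟩ | hum
            · right
              refine ⟨fun y l ξs u hl => hth_part y l ξs u hl, ?_⟩
              intro z nz θs u hl
              have hl2 : ξ₀.look z = some (nz, θs, u) := hl
              rw [hξ0] at hl2
              have h4 := (htok uu hu1 (by omega)).2 z nz θs u hl2
              left
              omega
            · left
              refine ⟨w, c, by omega, hwn, hcm, ?_, hwlen,
                Or.inr (Or.inl ⟨hkk, yy, BB, ll, ξ₀, ?_, ?_⟩)⟩
              · have := hendm c hcm; omega
              · rw [hd]; exact hvar
              · rw [hd, ← hce]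
                exact hlook
            · rcases IHw uu (by omega) (by omega) (by omega) with hW | ⟨-, hXIu⟩
              · exact Or.inl hW
              right
              refine ⟨fun y l ξs u hl => hth_part y l ξs u hl, ?_⟩
              intro z nz θs u hl
              have hl2 : ξ₀.look z = some (nz, θs, u) := hl
              rw [hξ0] at hl2
              exact hXIu z nz θs u hl2
        | B1 nn f A rr ss dd sd hconst hha hss =>
          right
          exact ⟨fun y l ξs u hl => hTH y l ξs u (by rw [hs]; exact hl),
                 fun z nz θs u hl => hXI z nz θs u (by rw [hs]; exact hl)⟩
        | C1 nn yy BB ll rr θ ξ aa hvar hstrip =>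
          exfalso
          have hfin : (π.pos w).st.IsFinal := by rw [hd]; exact isFinal_ite _
          exact nonfinal π (by omega) hwlen hfin
        | C2 nn yy BB rr θ ξ cc A ss dd sd hvar hA hha hss =>
          right
          exact ⟨fun y l ξs u hl => hTH y l ξs u (by rw [hs]; exact hl),
                 fun z nz θs u hl => hXI z nz θs u (by rw [hs]; exact hl)⟩
        | C2f nn yy BB rr θ ξ cc A hvar hA hha =>
          exfalso
          have hfin : (π.pos w).st.IsFinal := by rw [hd]; trivial
          exact nonfinal π (by omega) hwlen hfin
        | C3 nn yy BB ll rr θ ξ f A ws ss dd wd sd hvar hha hws hhr hwd hsd =>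
          right
          constructor
          · intro y l ξs u hl
            exact hTH y l ξs u (by rw [hs]; exact hl)
          · intro z nz θs u hl
            have hl2 : (ξ.updates (cUpd nn ll.stripLams.1 θ (w-1))).look z
                = some (nz, θs, u) := hl
            rw [xi_look_updates] at hl2
            cases hlk2 : (cUpd nn ll.stripLams.1 θ (w-1)).lookup z with
            | some vv2 =>
              rw [hlk2] at hl2
              simp only [Option.some.injEq] at hl2
              obtain ⟨-, hv2⟩ := cUpd_lookup hlk2
              have h3 : vv2.2.2 = u := by
                have h5 := congrArg (fun t : List ℕ × Theta × ℕ => t.2.2) hl2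
                simpa using h5
              right
              omega
            | none =>
              rw [hlk2] at hl2
              exact hXI z nz θs u (by rw [hs]; exact hl2)
        | C3f nn yy BB ll rr θ ξ f A ws hvar hha hws hhr =>
          exfalso
          have hfin : (π.pos w).st.IsFinal := by rw [hd]; trivial
          exact nonfinal π (by omega) hwlen hfin
        | C4 nn yy BB ll rr θ θ₀ ξ xx CC ws nz' ii hvar hha hlook =>
          have hxi_part : ∀ z nz θs u,
              (ξ.updates (cUpd nn ll.stripLams.1 θ (w-1))).look z = some (nz, θs, u) →
              u < i ∨ m < u := by
            intro z nz θs u hl2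
            rw [xi_look_updates] at hl2
            cases hlk2 : (cUpd nn ll.stripLams.1 θ (w-1)).lookup z with
            | some vv2 =>
              rw [hlk2] at hl2
              simp only [Option.some.injEq] at hl2
              obtain ⟨-, hv2⟩ := cUpd_lookup hlk2
              have h3 : vv2.2.2 = u := by
                have h5 := congrArg (fun t : List ℕ × Theta × ℕ => t.2.2) hl2
                simpa using h5
              right
              omega
            | none =>
              rw [hlk2] at hl2
              exact hXI z nz θs u (by rw [hs]; exact hl2)
          have hlook2 := hlook
          rw [xi_look_updates] at hlook2
          cases hlk : (cUpd nn ll.stripLams.1 θ (w-1)).lookup xx with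
          | some vv =>
            rw [hlk] at hlook2
            simp only [Option.some.injEq] at hlook2
            obtain ⟨hvθ, -⟩ := cUpd_lookup hlk
            have hθ0 : θ₀ = θ := by
              have h2 : vv.2.1 = θ₀ := by
                have h5 := congrArg (fun t : List ℕ × Theta × ℕ => t.2.1) hlook2
                simpa using h5
              rw [← h2, hvθ]
            right
            refine ⟨?_, fun z nz θs u hl => hxi_part z nz θs u hl⟩
            intro y l ξs u hl
            have hl2 : θ₀.look y = some (l, ξs, u) := hl
            rw [hθ0] at hl2
            exact hTH y l ξs u (by rw [hs]; exact hl2)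
          | none =>
            rw [hlk] at hlook2
            have hxiu := hXI xx nz' θ₀ ii (by rw [hs]; exact hlook2)
            have htokw := (htok (w-1) hv1 (by omega)).2 xx nz' θ₀ ii (by rw [hs]; exact hlook2)
            obtain ⟨hi1', hiw, hθ0, -⟩ := htokw
            rcases hxiu with hii | hmi
            · right
              refine ⟨?_, fun z nz θs u hl => hxi_part z nz θs u hl⟩
              intro y l ξs u hl
              have hl2 : θ₀.look y = some (l, ξs, u) := hl
              rw [hθ0] at hl2
              have h4 := (htok ii hi1' (by omega)).1 y l ξs u hl2
              left
              omega
            · rcases IHw ii (by omega) (by omega) (by omega) with hW | ⟨hTHi, -⟩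
              · exact Or.inl hW
              right
              refine ⟨?_, fun z nz θs u hl => hxi_part z nz θs u hl⟩
              intro y l ξs u hl
              have hl2 : θ₀.look y = some (l, ξs, u) := hl
              rw [hθ0] at hl2
              exact hTHi y l ξs u hl2
  -- conclude: either a witness, or a contradiction at the closing C4 move
  rcases hinv (cab.2 - 1) (by omega) (le_refl _) with hW | ⟨-, hXIb⟩
  · exact hW
  · exfalso
    have hmv := π.steps (cab.2 - 1) (by omega) (by omega)
    have hbeq : cab.2 - 1 + 1 = cab.2 := by omega
    rw [hbeq, hkC4] at hmv
    generalize hs : π.pos (cab.2 - 1) = s at hmv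
    generalize hd : π.pos cab.2 = dpos at hmv
    cases hmv with
    | C4 nn yy BB ll rr θ θ₀ ξ xx CC ws nz' ii hvar hha hlookx =>
      rw [hd] at hlookb
      have hlookb2 : (ξ.updates (cUpd nn ll.stripLams.1 θ (cab.2 - 1))).look xC
          = some (nz', θ₀, cab.1) := hlookb
      rw [xi_look_updates] at hlookb2
      cases hlk : (cUpd nn ll.stripLams.1 θ (cab.2 - 1)).lookup xC with
      | some vv =>
        rw [hlk] at hlookb2
        simp only [Option.some.injEq] at hlookb2
        obtain ⟨-, he2⟩ := cUpd_lookup hlk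
        have h3 : vv.2.2 = cab.1 := by
          have h5 := congrArg (fun t : List ℕ × Theta × ℕ => t.2.2) hlookb2
          simpa using h5
        omega
      | none =>
        rw [hlk] at hlookb2
        have h6 := hXIb xC nz' θ₀ cab.1 (by rw [hs]; exact hlookb2)
        omega
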